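/- Let Γ be a tetravalent G-half-arc-transitive graph for some G ≤ Aut(Γ) such that 3 ≤ a < r, where r = rad_G(Γ) and a = att_G(Γ). Suppose γ ∈ G fixes some G-alternating cycle C setwise, as well as each of the G-attachment sets containing vertices of C (setwise). Then γ ∈ K_G(Alt_G(Γ)), i.e. γ fixes every G-alternating cycle of Γ setwise. -/

import Mathlib

/-! Common definitions for tetravalent half-arc-transitive graph theory. -/

open SimpleGraph Set

namespace HalfArc

variable {V W : Type*}

/-- A subgroup of automorphisms acts transitively on the vertices. -/
def IsVertexTrans (Γ : SimpleGraph V) (G : Subgroup (Γ ≃g Γ)) : Prop :=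
  ∀ u v : V, ∃ g ∈ G, g u = v

/-- A subgroup of automorphisms acts transitively on the edges. -/
def IsEdgeTrans (Γ : SimpleGraph V) (G : Subgroup (Γ ≃g Γ)) : Prop :=
  ∀ ⦃u v u' v' : V⦄, Γ.Adj u v → Γ.Adj u' v' →
    ∃ g ∈ G, (g u = u' ∧ g v = v') ∨ (g u = v' ∧ g v = u')

/-- A subgroup of automorphisms acts transitively on the arcs (ordered pairs of
adjacent vertices). -/
def IsArcTrans (Γ : SimpleGraph V) (G : Subgroup (Γ ≃g Γ)) : Prop :=
  ∀ ⦃u v u' v' : V⦄, Γ.Adj u v → Γ.Adj u' v' → ∃ g ∈ G, g u = u' ∧ g v = v'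

/-- Half-arc-transitive: vertex- and edge- but not arc-transitive. -/
def IsHalfArcTrans (Γ : SimpleGraph V) (G : Subgroup (Γ ≃g Γ)) : Prop :=
  IsVertexTrans Γ G ∧ IsEdgeTrans Γ G ∧ ¬ IsArcTrans Γ G

/-- An alternating cycle of length `n` in a graph `Γ` whose edges carry an
orientation `O`: a cyclic sequence of pairwise distinct vertices in which
consecutive vertices are adjacent and any two consecutive edges have opposite
orientations. -/
structure AltCycle (Γ : SimpleGraph V) (O : V → V → Prop) (n : ℕ) where
  f : ZMod n → V
  inj : Function.Injective f
  adj : ∀ i, Γ.Adj (f i) (f (i + 1))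
  alt : ∀ i, O (f i) (f (i + 1)) ↔ O (f (i + 2)) (f (i + 1))

/-- The vertex set of an alternating cycle. -/
def cycVerts {Γ : SimpleGraph V} {O : V → V → Prop} {n : ℕ} (c : AltCycle Γ O n) : Set V :=
  Set.range c.f

/-- The edge set of an alternating cycle. -/
def cycEdges {Γ : SimpleGraph V} {O : V → V → Prop} {n : ℕ} (c : AltCycle Γ O n) :
    Set (Sym2 V) :=
  Set.range fun i => s(c.f i, c.f (i + 1))

/-- The sets of edges of alternating cycles (an alternating cycle, as a subgraph,
is determined by its edge set). -/
def IsAltEdgeSet (Γ : SimpleGraph V) (O : V → V → Prop) (n : ℕ) (E : Set (Sym2 V)) : Prop :=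
  ∃ c : AltCycle Γ O n, cycEdges c = E

/-- The vertex sets of alternating cycles. -/
def IsAltVertSet (Γ : SimpleGraph V) (O : V → V → Prop) (n : ℕ) (A : Set V) : Prop :=
  ∃ c : AltCycle Γ O n, cycVerts c = A

/-- The set of vertices covered by a set of edges. -/
def suppOf (E : Set (Sym2 V)) : Set V := {v | ∃ e ∈ E, v ∈ e}

/-- The graph of alternating cycles: its vertices are the alternating cycles
(represented by their edge sets), two of them adjacent whenever they share a vertex. -/
def altGraph (Γ : SimpleGraph V) (O : V → V → Prop) (n : ℕ) :
    SimpleGraph {E : Set (Sym2 V) // IsAltEdgeSet Γ O n E} where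
  Adj X Y := X ≠ Y ∧ (suppOf X.1 ∩ suppOf Y.1).Nonempty
  symm := ⟨by
    rintro X Y ⟨hne, x, hx1, hx2⟩
    exact ⟨hne.symm, x, hx2, hx1⟩⟩
  loopless := ⟨by rintro X ⟨hne, -⟩; exact hne rfl⟩

/-- The attachment sets: nonempty intersections of (the vertex sets of) two distinct
alternating cycles. -/
def IsAttSet (Γ : SimpleGraph V) (O : V → V → Prop) (n : ℕ) (A : Set V) : Prop :=
  ∃ c c' : AltCycle Γ O n, cycEdges c ≠ cycEdges c' ∧ (cycVerts c ∩ cycVerts c').Nonempty ∧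
    A = cycVerts c ∩ cycVerts c'

/-- `attachmentIs Γ O n a` : any two distinct alternating cycles with nonempty
intersection meet in exactly `a` vertices. -/
def attachmentIs (Γ : SimpleGraph V) (O : V → V → Prop) (n a : ℕ) : Prop :=
  ∀ A : Set V, IsAttSet Γ O n A → A.ncard = a

/-- A `k`-step rotation of an alternating cycle (in one of the two directions). -/
def IsRot {Γ : SimpleGraph V} {O : V → V → Prop} {n : ℕ} (c : AltCycle Γ O n)
    (g : V → V) (k : ℕ) : Prop :=
  (∀ i, g (c.f i) = c.f (i + k)) ∨ (∀ i, g (c.f i) = c.f (i - k))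

/-- The setup of the paper: a finite connected tetravalent graph `Γ`, a subgroup `G`
of its automorphism group acting half-arc-transitively, one of the two `G`-induced
orientations `O` of the edges of `Γ` (an orbit of `G` on arcs), the `G`-radius `r`
(half the common length of all `G`-alternating cycles) and the `G`-attachment
number `att`, together with the basic structural facts relating them. -/
structure Setup (V : Type*) where
  Γ : SimpleGraph V
  finite : Finite V
  conn : Γ.Connected
  tetra : ∀ v : V, (Γ.neighborSet v).ncard = 4
  G : Subgroup (Γ ≃g Γ)
  hat : IsHalfArcTrans Γ G
  O : V → V → Prop
  O_adj : ∀ ⦃u v⦄, O u v → Γ.Adj u v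
  O_choice : ∀ ⦃u v⦄, Γ.Adj u v → (O u v ↔ ¬ O v u)
  O_inv : ∀ g ∈ G, ∀ ⦃u v⦄, O u v → O (g u) (g v)
  O_orbit : ∀ ⦃u v u' v'⦄, O u v → O u' v' → ∃ g ∈ G, g u = u' ∧ g v = v'
  r : ℕ
  r_pos : 0 < r
  /-- every vertex lies on exactly two `G`-alternating cycles, each of length `2 * r` -/
  alt_cover : ∀ v : V, {E : Set (Sym2 V) | IsAltEdgeSet Γ O (2 * r) E ∧ v ∈ suppOf E}.ncard = 2
  att : ℕ
  att_pos : 0 < att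
  /-- any two non-disjoint `G`-alternating cycles meet in exactly `att` vertices -/
  att_eq : attachmentIs Γ O (2 * r) att
  att_dvd : att ∣ 2 * r

namespace Setup

variable {V : Type*} (S : Setup V)

/-- The kernel of the action of `G` on the set of `G`-alternating cycles:
the elements of `G` fixing every `G`-alternating cycle setwise. -/
def altKernel : Subgroup (S.Γ ≃g S.Γ) where
  carrier := {g | g ∈ S.G ∧ ∀ E : Set (Sym2 V),
    IsAltEdgeSet S.Γ S.O (2 * S.r) E → Sym2.map (g : V → V) '' E = E}
  one_mem' := by
    refine ⟨S.G.one_mem, fun E _ => ?_⟩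
    have : Sym2.map ((1 : S.Γ ≃g S.Γ) : V → V) = id := by
      funext e
      have : ((1 : S.Γ ≃g S.Γ) : V → V) = id := rfl
      rw [this, Sym2.map_id, id]
    rw [this, Set.image_id]
  mul_mem' := by
    rintro g h ⟨hg, hg'⟩ ⟨hh, hh'⟩
    refine ⟨S.G.mul_mem hg hh, fun E hE => ?_⟩
    have hcomp : Sym2.map ((g * h : S.Γ ≃g S.Γ) : V → V)
        = Sym2.map (g : V → V) ∘ Sym2.map (h : V → V) := by
      funext e
      have : ((g * h : S.Γ ≃g S.Γ) : V → V) = (g : V → V) ∘ (h : V → V) := rfl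
      rw [this, Function.comp_apply, ← Sym2.map_map]
    rw [hcomp, Set.image_comp, hh' E hE, hg' E hE]
  inv_mem' := by
    rintro g ⟨hg, hg'⟩
    refine ⟨S.G.inv_mem hg, fun E hE => ?_⟩
    conv_lhs => rw [← hg' E hE]
    rw [← Set.image_comp]
    have : Sym2.map ((g⁻¹ : S.Γ ≃g S.Γ) : V → V) ∘ Sym2.map (g : V → V) = id := by
      funext e
      rw [Function.comp_apply, Sym2.map_map]
      have h1 : ((g⁻¹ : S.Γ ≃g S.Γ) : V → V) ∘ (g : V → V) = id := by
        funext v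
        exact g.toEquiv.symm_apply_apply v
      rw [h1, Sym2.map_id]
    rw [this, Set.image_id]

/-- The kernel of the action of `G` on a collection of sets of vertices. -/
def kernelOn (P : Set V → Prop) : Subgroup (S.Γ ≃g S.Γ) where
  carrier := {g | g ∈ S.G ∧ ∀ A : Set V, P A → (g : V → V) '' A = A}
  one_mem' := ⟨S.G.one_mem, fun A _ => by
    have : ((1 : S.Γ ≃g S.Γ) : V → V) = id := rfl
    rw [this, Set.image_id]⟩
  mul_mem' := by
    rintro g h ⟨hg, hg'⟩ ⟨hh, hh'⟩
    refine ⟨S.G.mul_mem hg hh, fun A hA => ?_⟩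
    have : ((g * h : S.Γ ≃g S.Γ) : V → V) = (g : V → V) ∘ (h : V → V) := rfl
    rw [this, Set.image_comp, hh' A hA, hg' A hA]
  inv_mem' := by
    rintro g ⟨hg, hg'⟩
    refine ⟨S.G.inv_mem hg, fun A hA => ?_⟩
    conv_lhs => rw [← hg' A hA]
    rw [← Set.image_comp]
    have : ((g⁻¹ : S.Γ ≃g S.Γ) : V → V) ∘ (g : V → V) = id := by
      funext v; exact g.toEquiv.symm_apply_apply v
    rw [this, Set.image_id]

/-- The kernel of the action of `G` on the set of all `G`-attachment sets. -/
def attKernel : Subgroup (S.Γ ≃g S.Γ) :=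
  S.kernelOn (IsAttSet S.Γ S.O (2 * S.r))

/-- The block `B_s(C; u_i) = {u_{i+2sj} : 0 ≤ j < att}` of Construction 5.3. -/
def blockSet (s : ℕ) (c : AltCycle S.Γ S.O (2 * S.r)) (i : ZMod (2 * S.r)) : Set V :=
  {v | ∃ j : ℕ, j < S.att ∧ v = c.f (i + (2 * s * j : ℕ))}

/-- The imprimitivity block system `B` of Construction 5.3. -/
def Blocks (s : ℕ) : Set (Set V) :=
  {A | ∃ (c : AltCycle S.Γ S.O (2 * S.r)) (i : ZMod (2 * S.r)), A = S.blockSet s c i}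

/-- The quotient graph `Γ_B` of `Γ` with respect to the block system `B`. -/
def quotGraph (s : ℕ) : SimpleGraph {A : Set V // A ∈ S.Blocks s} where
  Adj X Y := X ≠ Y ∧ ∃ u ∈ X.1, ∃ v ∈ Y.1, S.Γ.Adj u v
  symm := ⟨by
    rintro X Y ⟨hne, u, hu, v, hv, ha⟩
    exact ⟨hne.symm, v, hv, u, hu, ha.symm⟩⟩
  loopless := ⟨by rintro X ⟨hne, -⟩; exact hne rfl⟩

/-- The kernel of the action of `G` on the quotient graph `Γ_B`. -/
def quotKernel (s : ℕ) : Subgroup (S.Γ ≃g S.Γ) :=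
  S.kernelOn (· ∈ S.Blocks s)

/-- The orientation of the edges of the quotient graph `Γ_B` induced by `O`. -/
def quotO (s : ℕ) (X Y : {A : Set V // A ∈ S.Blocks s}) : Prop :=
  ∃ u ∈ X.1, ∃ v ∈ Y.1, S.O u v

end Setup

/-- The data defining the parameters `q_t` and `q_h` of Section 3: a vertex `v`,
the two `G`-alternating cycles `c` and `c'` through `v` (with `v = u_0 = v_0` and
`v` the tail of the two arcs of `c` incident to it), and the minimality properties
defining `q_t` and `q_h`.  Here `ell = 2r/att`. -/
structure JumpData {V : Type*} (S : Setup V) where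
  v : V
  c : AltCycle S.Γ S.O (2 * S.r)
  c' : AltCycle S.Γ S.O (2 * S.r)
  ell : ℕ
  hell : S.att * ell = 2 * S.r
  hc : c.f 0 = v
  hc' : c'.f 0 = v
  hne : cycEdges c ≠ cycEdges c'
  htail₁ : S.O v (c.f 1)
  htail₂ : S.O v (c.f (-1))
  qt : ℕ
  qh : ℕ
  hqt : c'.f ((qt * ell : ℕ)) = c.f ((ell : ℕ)) ∨
    c'.f ((qt * ell : ℕ)) = c.f (-(ell : ZMod (2 * S.r)))
  hqt_min : ∀ m : ℕ, m < qt → ¬(c'.f ((m * ell : ℕ)) = c.f ((ell : ℕ)) ∨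
    c'.f ((m * ell : ℕ)) = c.f (-(ell : ZMod (2 * S.r))))
  hqh : c.f ((qh * ell : ℕ)) = c'.f ((ell : ℕ)) ∨
    c.f ((qh * ell : ℕ)) = c'.f (-(ell : ZMod (2 * S.r)))
  hqh_min : ∀ m : ℕ, m < qh → ¬(c.f ((m * ell : ℕ)) = c'.f ((ell : ℕ)) ∨
    c.f ((m * ell : ℕ)) = c'.f (-(ell : ZMod (2 * S.r))))

/-- The `G`-alternating jump `jum_G(Γ) = min {q_t, q_h}`. -/
def JumpData.jump {V : Type*} {S : Setup V} (J : JumpData S) : ℕ := min J.qt J.qh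
namespace Lem51

open Set

variable {V : Type*}

instance (S : Setup V) : NeZero (2 * S.r) := ⟨by have := S.r_pos; omega⟩

/-- Parity of an index. -/
def P2 (S : Setup V) : ZMod (2 * S.r) →+* ZMod 2 := ZMod.castHom ⟨S.r, rfl⟩ (ZMod 2)

variable {S : Setup V}

lemma P2_natCast (m : ℕ) : P2 S (m : ZMod (2 * S.r)) = (m : ZMod 2) := map_natCast _ m

lemma natCast_val_eq (i : ZMod (2 * S.r)) : ((i.val : ℕ) : ZMod (2 * S.r)) = i :=
  ZMod.natCast_rightInverse i

lemma even_rep {s : ZMod (2 * S.r)} (hs : P2 S s = 0) :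
    ∃ m : ℕ, s = ((2 * m : ℕ) : ZMod (2 * S.r)) := by
  have hv := natCast_val_eq s
  have h2 : ((s.val : ℕ) : ZMod 2) = 0 := by
    rw [← P2_natCast (S := S), hv]; exact hs
  have : (2 : ℕ) ∣ s.val := by
    rwa [ZMod.natCast_eq_zero_iff] at h2
  obtain ⟨m, hm⟩ := this
  exact ⟨m, by rw [← hm, hv]⟩

lemma two_nonzero (hr : 4 ≤ S.r) : (2 : ZMod (2 * S.r)) ≠ 0 := by
  intro h
  have h' : ((2 : ℕ) : ZMod (2 * S.r)) = 0 := by push_cast; exact h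
  rw [ZMod.natCast_eq_zero_iff] at h'
  have := Nat.le_of_dvd (by norm_num) h'
  omega

/-- `2*s = 0` forces `s ∈ {0, r}`. -/
lemma two_smul_zero {s : ZMod (2 * S.r)} (hs : s + s = 0) :
    s = 0 ∨ s = ((S.r : ℕ) : ZMod (2 * S.r)) := by
  have hv := natCast_val_eq s
  have h2 : ((s.val + s.val : ℕ) : ZMod (2 * S.r)) = 0 := by push_cast; rw [hv]; exact hs
  rw [ZMod.natCast_eq_zero_iff] at h2
  have hlt : s.val < 2 * S.r := ZMod.val_lt s
  rcases h2 with ⟨k, hk⟩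
  have hr0 := S.r_pos
  have hk1 : k ≤ 1 := by nlinarith
  interval_cases k
  · left; rw [← hv, show s.val = 0 by omega]; simp
  · right; rw [← hv, show s.val = S.r by omega]

section Cycle

variable (c : AltCycle S.Γ S.O (2 * S.r))

lemma mem_cycEdges (i : ZMod (2 * S.r)) : s(c.f i, c.f (i + 1)) ∈ cycEdges c := ⟨i, rfl⟩

lemma mem_cycVerts (i : ZMod (2 * S.r)) : c.f i ∈ cycVerts c := ⟨i, rfl⟩

lemma cycEdges_sub_edgeSet : cycEdges c ⊆ S.Γ.edgeSet := by
  rintro e ⟨i, rfl⟩; exact c.adj i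

lemma suppOf_cycEdges : suppOf (cycEdges c) = cycVerts c := by
  ext v
  constructor
  · rintro ⟨e, ⟨i, rfl⟩, hv⟩
    rcases Sym2.mem_iff.mp hv with h | h
    · exact ⟨i, h.symm⟩
    · exact ⟨i + 1, h.symm⟩
  · rintro ⟨i, rfl⟩
    exact ⟨s(c.f i, c.f (i + 1)), ⟨i, rfl⟩, Sym2.mem_mk_left _ _⟩

lemma edge_mem_iff {x y : ZMod (2 * S.r)} :
    s(c.f x, c.f y) ∈ cycEdges c ↔ (y = x + 1 ∨ x = y + 1) := by
  constructor
  · rintro ⟨j, hj⟩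
    rcases Sym2.eq_iff.mp hj with ⟨h1, h2⟩ | ⟨h1, h2⟩
    · left; rw [← c.inj h1, ← c.inj h2]
    · right; rw [← c.inj h1, ← c.inj h2]
  · rintro (rfl | rfl)
    · exact mem_cycEdges c x
    · exact (Sym2.eq_swap (a := c.f (y+1)) (b := c.f y)) ▸ mem_cycEdges c y

end Cycle

section MapCycle

lemma O_apply_iff {g : S.Γ ≃g S.Γ} (hg : g ∈ S.G) {u v : V} (huv : S.Γ.Adj u v) :
    S.O (g u) (g v) ↔ S.O u v := by
  constructor
  · intro h
    by_contra hn
    have h2 : S.O v u := (S.O_choice huv.symm).mpr (by simpa using hn)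
    have h3 := S.O_inv g hg h2
    exact (S.O_choice (g.map_adj_iff.mpr huv).symm).mp h3 h
  · exact fun h => S.O_inv g hg h

/-- Image of an alternating cycle under an element of `G`. -/
def mapCycle (g : S.Γ ≃g S.Γ) (hg : g ∈ S.G) (c : AltCycle S.Γ S.O (2 * S.r)) :
    AltCycle S.Γ S.O (2 * S.r) where
  f i := g (c.f i)
  inj i j h := c.inj (g.toEquiv.injective h)
  adj i := g.map_adj_iff.mpr (c.adj i)
  alt i := by
    have e2 : i + 1 + 1 = i + 2 := by ring
    have h2 : S.Γ.Adj (c.f (i + 2)) (c.f (i + 1)) := by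
      rw [← e2]; exact (c.adj (i + 1)).symm
    rw [O_apply_iff hg (c.adj i), O_apply_iff hg h2]
    exact c.alt i

lemma cycEdges_mapCycle (g : S.Γ ≃g S.Γ) (hg : g ∈ S.G) (c : AltCycle S.Γ S.O (2 * S.r)) :
    cycEdges (mapCycle g hg c) = Sym2.map (g : V → V) '' cycEdges c := by
  unfold cycEdges
  rw [← Set.range_comp]
  congr 1

lemma cycVerts_mapCycle (g : S.Γ ≃g S.Γ) (hg : g ∈ S.G) (c : AltCycle S.Γ S.O (2 * S.r)) :
    cycVerts (mapCycle g hg c) = (g : V → V) '' cycVerts c := by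
  unfold cycVerts
  rw [← Set.range_comp]
  rfl

lemma isAlt_map {E : Set (Sym2 V)} (hE : IsAltEdgeSet S.Γ S.O (2 * S.r) E)
    (g : S.Γ ≃g S.Γ) (hg : g ∈ S.G) :
    IsAltEdgeSet S.Γ S.O (2 * S.r) (Sym2.map (g : V → V) '' E) := by
  obtain ⟨c, rfl⟩ := hE
  exact ⟨mapCycle g hg c, cycEdges_mapCycle g hg c⟩

lemma suppOf_map (g : S.Γ ≃g S.Γ) (E : Set (Sym2 V)) :
    suppOf (Sym2.map (g : V → V) '' E) = (g : V → V) '' suppOf E := by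
  ext v
  constructor
  · rintro ⟨e', ⟨e, he, rfl⟩, hv⟩
    obtain ⟨a, ha, rfl⟩ := Sym2.mem_map.mp hv
    exact ⟨a, ⟨e, he, ha⟩, rfl⟩
  · rintro ⟨a, ⟨e, he, ha⟩, rfl⟩
    exact ⟨Sym2.map _ e, ⟨e, he, rfl⟩, Sym2.mem_map.mpr ⟨a, ha, rfl⟩⟩

lemma mapE_inv_cancel (g : S.Γ ≃g S.Γ) (E : Set (Sym2 V)) :
    Sym2.map ((g⁻¹ : S.Γ ≃g S.Γ) : V → V) '' (Sym2.map (g : V → V) '' E) = E := by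
  rw [← Set.image_comp]
  have hcomp : (Sym2.map ((g⁻¹ : S.Γ ≃g S.Γ) : V → V)) ∘ (Sym2.map (g : V → V)) = id := by
    funext e
    rw [Function.comp_apply, Sym2.map_map]
    have h1 : (((g⁻¹ : S.Γ ≃g S.Γ) : V → V)) ∘ (g : V → V) = id := by
      funext v; exact g.toEquiv.symm_apply_apply v
    rw [h1, Sym2.map_id]
  rw [hcomp, Set.image_id]

lemma fix_inv {g : S.Γ ≃g S.Γ} {E : Set (Sym2 V)}
    (h : Sym2.map (g : V → V) '' E = E) :
    Sym2.map ((g⁻¹ : S.Γ ≃g S.Γ) : V → V) '' E = E := by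
  conv_lhs => rw [← h]
  exact mapE_inv_cancel g E

lemma fix_supp {g : S.Γ ≃g S.Γ} {E : Set (Sym2 V)}
    (h : Sym2.map (g : V → V) '' E = E) :
    (g : V → V) '' suppOf E = suppOf E := by
  conv_rhs => rw [← h]
  exact (suppOf_map g E).symm

lemma mapE_of_pointwise {g : S.Γ ≃g S.Γ} (c : AltCycle S.Γ S.O (2 * S.r))
    {k : ZMod (2 * S.r)} (hk : ∀ i, g (c.f i) = c.f (i + k)) :
    Sym2.map (g : V → V) '' cycEdges c = cycEdges c := by
  ext e
  constructor
  · rintro ⟨e', ⟨i, rfl⟩, rfl⟩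
    rw [Sym2.map_pair_eq]
    have : (g : V → V) (c.f i) = c.f (i + k) := hk i
    rw [this]
    have h2 : (g : V → V) (c.f (i + 1)) = c.f (i + k + 1) := by
      rw [hk (i + 1)]; congr 1; ring
    rw [h2]
    exact mem_cycEdges c (i + k)
  · rintro ⟨i, rfl⟩
    refine ⟨s(c.f (i - k), c.f (i - k + 1)), ⟨i - k, rfl⟩, ?_⟩
    rw [Sym2.map_pair_eq]
    have h1 : (g : V → V) (c.f (i - k)) = c.f i := by rw [hk (i-k)]; congr 1; ring
    have h2 : (g : V → V) (c.f (i - k + 1)) = c.f (i + 1) := by rw [hk (i-k+1)]; congr 1; ring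
    rw [h1, h2]

end MapCycle

section Parity

variable (c : AltCycle S.Γ S.O (2 * S.r))

lemma O_flip (i : ZMod (2 * S.r)) :
    S.O (c.f (i + 1)) (c.f (i + 1 + 1)) ↔ ¬ S.O (c.f i) (c.f (i + 1)) := by
  have e2 : i + 1 + 1 = i + 2 := by ring
  have h2 : S.Γ.Adj (c.f (i + 1)) (c.f (i + 1 + 1)) := c.adj (i + 1)
  rw [S.O_choice h2, e2]
  exact not_congr (c.alt i).symm

lemma alt_parity : ∃ ε : ZMod 2, ∀ i : ZMod (2 * S.r),
    S.O (c.f i) (c.f (i + 1)) ↔ P2 S i = ε := by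
  classical
  have zmod2 : ∀ x y : ZMod 2, (¬ x = y) ↔ x + 1 = y := by decide
  refine ⟨if S.O (c.f 0) (c.f (0 + 1)) then 0 else 1, ?_⟩
  have key : ∀ m : ℕ, S.O (c.f (m : ZMod (2 * S.r))) (c.f ((m : ZMod (2 * S.r)) + 1)) ↔
      ((m : ZMod 2) = if S.O (c.f 0) (c.f (0 + 1)) then 0 else 1) := by
    intro m
    induction m with
    | zero =>
        split_ifs with h
        · exact iff_of_true (by simpa using h) (by norm_num)
        · exact iff_of_false (by simpa using h) (by norm_num)
    | succ m ih =>
        have hc : ((m + 1 : ℕ) : ZMod (2 * S.r)) = (m : ZMod (2 * S.r)) + 1 := by push_cast; ring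
        have hc2 : ((m + 1 : ℕ) : ZMod 2) = (m : ZMod 2) + 1 := by push_cast; ring
        rw [hc, hc2, O_flip c (m : ZMod (2 * S.r)), ih, zmod2]
  intro i
  have hv := natCast_val_eq i
  have hkey := key i.val
  rw [hv] at hkey
  have hP : P2 S i = ((i.val : ℕ) : ZMod 2) := by rw [← hv, P2_natCast, hv]
  rw [hkey, hP]

end Parity

section Blocks

/-- The (two) alternating edge sets through a vertex. -/
def cyclesAt (S : Setup V) (v : V) : Set (Set (Sym2 V)) :=
  {E | IsAltEdgeSet S.Γ S.O (2 * S.r) E ∧ v ∈ suppOf E}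

/-- The attachment set containing a vertex. -/
def blockOf (S : Setup V) (v : V) : Set V := ⋂ E ∈ cyclesAt S v, suppOf E

lemma ncard_cyclesAt (v : V) : (cyclesAt S v).ncard = 2 := S.alt_cover v

lemma cyc_mem_cyclesAt (c : AltCycle S.Γ S.O (2 * S.r)) {v : V} (hv : v ∈ cycVerts c) :
    cycEdges c ∈ cyclesAt S v :=
  ⟨⟨c, rfl⟩, by rw [suppOf_cycEdges]; exact hv⟩

lemma cyclesAt_pair (v : V) : ∃ E₁ E₂, E₁ ≠ E₂ ∧ cyclesAt S v = {E₁, E₂} :=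
  Set.ncard_eq_two.mp (ncard_cyclesAt v)

lemma cyclesAt_eq_pair {v : V} {E₁ E₂ : Set (Sym2 V)} (hne : E₁ ≠ E₂)
    (h1 : E₁ ∈ cyclesAt S v) (h2 : E₂ ∈ cyclesAt S v) :
    cyclesAt S v = {E₁, E₂} := by
  haveI := S.finite
  refine (Set.eq_of_subset_of_ncard_le ?_ ?_ (Set.toFinite _)).symm
  · intro E hE
    simp only [Set.mem_insert_iff, Set.mem_singleton_iff] at hE
    rcases hE with rfl | rfl <;> assumption
  · rw [ncard_cyclesAt, Set.ncard_pair hne]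

lemma mem_blockOf_self (v : V) : v ∈ blockOf S v :=
  Set.mem_iInter₂.mpr fun _ hE => hE.2

lemma blockOf_subset {v : V} {E : Set (Sym2 V)} (hE : E ∈ cyclesAt S v) :
    blockOf S v ⊆ suppOf E :=
  fun _ hu => (Set.mem_iInter₂.mp hu) E hE

lemma cyclesAt_eq_of_mem {u v : V} (hu : u ∈ blockOf S v) : cyclesAt S u = cyclesAt S v := by
  haveI := S.finite
  refine (Set.eq_of_subset_of_ncard_le ?_ ?_ (Set.toFinite _)).symm
  · intro E hE
    exact ⟨hE.1, blockOf_subset hE hu⟩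
  · rw [ncard_cyclesAt, ncard_cyclesAt]

lemma blockOf_eq_of_mem {u v : V} (hu : u ∈ blockOf S v) : blockOf S u = blockOf S v := by
  unfold blockOf; rw [cyclesAt_eq_of_mem hu]

lemma blockOf_eq_pair {v : V} {E₁ E₂ : Set (Sym2 V)} (h : cyclesAt S v = {E₁, E₂}) :
    blockOf S v = suppOf E₁ ∩ suppOf E₂ := by
  unfold blockOf; rw [h, Set.biInter_pair]

lemma cyclesAt_map (g : S.Γ ≃g S.Γ) (hg : g ∈ S.G) (v : V) :
    cyclesAt S ((g : V → V) v) = (fun E => Sym2.map (g : V → V) '' E) '' cyclesAt S v := by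
  have hcan : ∀ w, ((g⁻¹ : S.Γ ≃g S.Γ) : V → V) ((g : V → V) w) = w :=
    fun w => g.toEquiv.symm_apply_apply w
  ext E
  constructor
  · rintro ⟨hE, hv⟩
    refine ⟨Sym2.map ((g⁻¹ : S.Γ ≃g S.Γ) : V → V) '' E,
      ⟨isAlt_map hE _ (S.G.inv_mem hg), ?_⟩, ?_⟩
    · rw [suppOf_map]
      exact ⟨(g : V → V) v, hv, hcan v⟩
    · show Sym2.map (g : V → V) '' (Sym2.map ((g⁻¹ : S.Γ ≃g S.Γ) : V → V) '' E) = E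
      rw [← Set.image_comp]
      have : (Sym2.map ((g : V → V)) ∘ Sym2.map (((g⁻¹ : S.Γ ≃g S.Γ) : V → V))) = id := by
        funext e
        rw [Function.comp_apply, Sym2.map_map]
        have h1 : ((g : V → V)) ∘ (((g⁻¹ : S.Γ ≃g S.Γ) : V → V)) = id := by
          funext w; exact g.toEquiv.apply_symm_apply w
        rw [h1, Sym2.map_id]
      rw [this, Set.image_id]
  · rintro ⟨F, ⟨hF, hvF⟩, rfl⟩
    refine ⟨isAlt_map hF g hg, ?_⟩
    rw [suppOf_map]
    exact ⟨v, hvF, rfl⟩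

lemma blockOf_map (g : S.Γ ≃g S.Γ) (hg : g ∈ S.G) (v : V) :
    blockOf S ((g : V → V) v) = (g : V → V) '' blockOf S v := by
  obtain ⟨E₁, E₂, hne, hpair⟩ := cyclesAt_pair (S := S) v
  have h2 : cyclesAt S ((g : V → V) v) =
      {Sym2.map (g : V → V) '' E₁, Sym2.map (g : V → V) '' E₂} := by
    rw [cyclesAt_map g hg v, hpair, Set.image_insert_eq, Set.image_singleton]
  have hinj : Function.Injective ((g : V → V)) := fun a b h => g.toEquiv.injective h
  rw [blockOf_eq_pair h2, blockOf_eq_pair hpair, suppOf_map, suppOf_map]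
  exact (Set.image_inter hinj).symm

lemma blockOf_isAtt (v : V) : IsAttSet S.Γ S.O (2 * S.r) (blockOf S v) := by
  obtain ⟨E₁, E₂, hne, hpair⟩ := cyclesAt_pair (S := S) v
  have h1 : E₁ ∈ cyclesAt S v := by rw [hpair]; exact Set.mem_insert _ _
  have h2 : E₂ ∈ cyclesAt S v := by rw [hpair]; exact Set.mem_insert_iff.mpr (Or.inr rfl)
  obtain ⟨c₁, hc₁⟩ := h1.1
  obtain ⟨c₂, hc₂⟩ := h2.1
  refine ⟨c₁, c₂, by rw [hc₁, hc₂]; exact hne, ?_, ?_⟩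
  · refine ⟨v, ?_, ?_⟩
    · rw [← suppOf_cycEdges, hc₁]; exact h1.2
    · rw [← suppOf_cycEdges, hc₂]; exact h2.2
  · rw [blockOf_eq_pair hpair, ← hc₁, ← hc₂, suppOf_cycEdges, suppOf_cycEdges]

lemma ncard_blockOf (v : V) : (blockOf S v).ncard = S.att :=
  S.att_eq _ (blockOf_isAtt v)

end Blocks

section EdgeUnique

lemma exists_O_arc (c0 : AltCycle S.Γ S.O (2 * S.r)) :
    ∃ x y : V, S.O x y ∧ s(x, y) ∈ cycEdges c0 := by
  by_cases h : S.O (c0.f 0) (c0.f (0 + 1))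
  · exact ⟨_, _, h, mem_cycEdges c0 0⟩
  · have h2 : S.O (c0.f (0 + 1)) (c0.f 0) := by
      by_contra h3
      exact h ((S.O_choice (c0.adj 0)).mpr h3)
    exact ⟨_, _, h2, by rw [Sym2.eq_swap]; exact mem_cycEdges c0 0⟩

lemma edge_in_alt (c0 : AltCycle S.Γ S.O (2 * S.r)) {u v : V} (h : S.Γ.Adj u v) :
    ∃ E, IsAltEdgeSet S.Γ S.O (2 * S.r) E ∧ s(u, v) ∈ E := by
  obtain ⟨x, y, hxy, hmem⟩ := exists_O_arc c0
  have main : ∀ u' v' : V, S.O u' v' →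
      ∃ E, IsAltEdgeSet S.Γ S.O (2 * S.r) E ∧ s(u', v') ∈ E := by
    intro u' v' hO
    obtain ⟨g, hg, hgu, hgv⟩ := S.O_orbit hO hxy
    have hcan : ∀ w, ((g⁻¹ : S.Γ ≃g S.Γ) : V → V) ((g : V → V) w) = w :=
      fun w => g.toEquiv.symm_apply_apply w
    refine ⟨Sym2.map ((g⁻¹ : S.Γ ≃g S.Γ) : V → V) '' cycEdges c0,
      isAlt_map ⟨c0, rfl⟩ _ (S.G.inv_mem hg), ?_⟩
    have heq : s(u', v') = Sym2.map ((g⁻¹ : S.Γ ≃g S.Γ) : V → V) s(x, y) := by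
      rw [Sym2.map_pair_eq, ← hgu, ← hgv, hcan, hcan]
    rw [heq]
    exact ⟨s(x, y), hmem, rfl⟩
  by_cases hO : S.O u v
  · exact main u v hO
  · have hO' : S.O v u := by
      by_contra h3
      exact hO ((S.O_choice h).mpr h3)
    obtain ⟨E, hE, hmem'⟩ := main v u hO'
    exact ⟨E, hE, by rwa [Sym2.eq_swap]⟩

/-- The set of edges of `Γ` incident to a vertex. -/
def edgesAt (S : Setup V) (v : V) : Set (Sym2 V) := {e | e ∈ S.Γ.edgeSet ∧ v ∈ e}

lemma ncard_edgesAt (v : V) : (edgesAt S v).ncard = 4 := by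
  haveI := S.finite
  have himg : edgesAt S v = (fun x => s(v, x)) '' (S.Γ.neighborSet v) := by
    ext e
    constructor
    · rintro ⟨he, hv⟩
      induction e with
      | _ a b =>
        rcases Sym2.mem_iff.mp hv with rfl | rfl
        · exact ⟨b, he, rfl⟩
        · exact ⟨a, (S.Γ.mem_edgeSet.mp he).symm, Sym2.eq_swap⟩
    · rintro ⟨x, hx, rfl⟩
      exact ⟨S.Γ.mem_edgeSet.mpr hx, Sym2.mem_mk_left _ _⟩
  rw [himg, Set.ncard_image_of_injOn]
  · exact S.tetra v
  · intro x _ y _ hxy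
    rcases Sym2.eq_iff.mp hxy with ⟨-, h⟩ | ⟨h1, h2⟩
    · exact h
    · exact h2.trans h1

lemma cyc_edgesAt (hr : 4 ≤ S.r) (c : AltCycle S.Γ S.O (2 * S.r)) (i : ZMod (2 * S.r)) :
    {e | e ∈ cycEdges c ∧ c.f i ∈ e} = {s(c.f (i - 1), c.f i), s(c.f i, c.f (i + 1))} := by
  ext e
  constructor
  · rintro ⟨⟨j, rfl⟩, hv⟩
    rcases Sym2.mem_iff.mp hv with h | h
    · have hj : i = j := c.inj h
      subst hj
      exact Or.inr rfl
    · have hj : i = j + 1 := c.inj h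
      left
      have h1 : j = i - 1 := by rw [hj]; ring
      rw [h1]
      congr 2
      rw [hj]; ring
  · rintro (rfl | rfl)
    · refine ⟨?_, Sym2.mem_mk_right _ _⟩
      have h0 := mem_cycEdges c (i - 1)
      rwa [show i - 1 + 1 = i by ring] at h0
    · exact ⟨mem_cycEdges c i, Sym2.mem_mk_left _ _⟩

lemma cyc_edgesAt_ncard (hr : 4 ≤ S.r) (c : AltCycle S.Γ S.O (2 * S.r)) (i : ZMod (2 * S.r)) :
    {e | e ∈ cycEdges c ∧ c.f i ∈ e}.ncard = 2 := by
  haveI : Fact (1 < 2 * S.r) := ⟨by omega⟩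
  rw [cyc_edgesAt hr c i, Set.ncard_pair]
  intro h
  rcases Sym2.eq_iff.mp h with ⟨h1, h2⟩ | ⟨h1, h2⟩
  · have h3 : i - 1 = i := c.inj h1
    have : (1 : ZMod (2 * S.r)) = 0 := by linear_combination i - h3
    exact one_ne_zero this
  · have h3 : i - 1 = i + 1 := c.inj h1
    have : (2 : ZMod (2 * S.r)) = 0 := by linear_combination i - h3
    exact two_nonzero hr this

lemma edge_in_alt' (c0 : AltCycle S.Γ S.O (2 * S.r)) {e' : Sym2 V} (he' : e' ∈ S.Γ.edgeSet) :
    ∃ E, IsAltEdgeSet S.Γ S.O (2 * S.r) E ∧ e' ∈ E := by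
  revert he'
  induction e' using Sym2.ind with
  | _ x y => exact fun he' => edge_in_alt c0 (S.Γ.mem_edgeSet.mp he')

lemma edge_unique (hr : 4 ≤ S.r) (c0 : AltCycle S.Γ S.O (2 * S.r)) {E₁ E₂ : Set (Sym2 V)}
    (h₁ : IsAltEdgeSet S.Γ S.O (2 * S.r) E₁) (h₂ : IsAltEdgeSet S.Γ S.O (2 * S.r) E₂)
    {e : Sym2 V} (he₁ : e ∈ E₁) (he₂ : e ∈ E₂) : E₁ = E₂ := by
  by_contra hne
  haveI := S.finite
  obtain ⟨a, ha⟩ : ∃ a, a ∈ e := ⟨e.out.1, Sym2.out_fst_mem e⟩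
  have hv₁ : a ∈ suppOf E₁ := ⟨e, he₁, ha⟩
  have hv₂ : a ∈ suppOf E₂ := ⟨e, he₂, ha⟩
  have hpair : cyclesAt S a = {E₁, E₂} := cyclesAt_eq_pair hne ⟨h₁, hv₁⟩ ⟨h₂, hv₂⟩
  obtain ⟨c₁, rfl⟩ := h₁
  obtain ⟨c₂, rfl⟩ := h₂
  obtain ⟨i₁, hi₁⟩ : a ∈ cycVerts c₁ := by rwa [← suppOf_cycEdges]
  obtain ⟨i₂, hi₂⟩ : a ∈ cycVerts c₂ := by rwa [← suppOf_cycEdges]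
  set A₁ := {e' | e' ∈ cycEdges c₁ ∧ a ∈ e'} with hA₁
  set A₂ := {e' | e' ∈ cycEdges c₂ ∧ a ∈ e'} with hA₂
  have hn₁ : A₁.ncard = 2 := by rw [hA₁, ← hi₁]; exact cyc_edgesAt_ncard hr c₁ i₁
  have hn₂ : A₂.ncard = 2 := by rw [hA₂, ← hi₂]; exact cyc_edgesAt_ncard hr c₂ i₂
  have hsub : edgesAt S a ⊆ A₁ ∪ A₂ := by
    rintro e' ⟨he', hae'⟩
    obtain ⟨E, hE, heE⟩ := edge_in_alt' c0 he'
    have hEmem : E ∈ cyclesAt S a := ⟨hE, ⟨e', heE, hae'⟩⟩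
    rw [hpair] at hEmem
    simp only [Set.mem_insert_iff, Set.mem_singleton_iff] at hEmem
    rcases hEmem with rfl | rfl
    · exact Or.inl ⟨heE, hae'⟩
    · exact Or.inr ⟨heE, hae'⟩
  have hinter : 1 ≤ (A₁ ∩ A₂).ncard := by
    have hmem : e ∈ A₁ ∩ A₂ := ⟨⟨he₁, ha⟩, ⟨he₂, ha⟩⟩
    have := Set.ncard_pos (s := A₁ ∩ A₂) (Set.toFinite _) |>.mpr ⟨e, hmem⟩
    omega
  have hle : (edgesAt S a).ncard ≤ (A₁ ∪ A₂).ncard :=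
    Set.ncard_le_ncard hsub (Set.toFinite _)
  have hUnion : (A₁ ∪ A₂).ncard + (A₁ ∩ A₂).ncard = A₁.ncard + A₂.ncard :=
    Set.ncard_union_add_ncard_inter A₁ A₂ (Set.toFinite _) (Set.toFinite _)
  rw [ncard_edgesAt] at hle
  omega

end EdgeUnique

section Dihedral

lemma dihedral (hr : 4 ≤ S.r) {g : S.Γ ≃g S.Γ} (hg : g ∈ S.G)
    (c : AltCycle S.Γ S.O (2 * S.r))
    (hfix : Sym2.map (g : V → V) '' cycEdges c = cycEdges c) :
    (∃ k, ∀ i, (g : V → V) (c.f i) = c.f (i + k)) ∨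
    (∃ k, ∀ i, (g : V → V) (c.f i) = c.f (k - i)) := by
  haveI := S.finite
  have hverts : (g : V → V) '' cycVerts c = cycVerts c := by
    rw [← suppOf_cycEdges]
    exact fix_supp hfix
  have hex : ∀ i, ∃ j, (g : V → V) (c.f i) = c.f j := by
    intro i
    have hmem : (g : V → V) (c.f i) ∈ cycVerts c := by
      rw [← hverts]; exact ⟨c.f i, mem_cycVerts c i, rfl⟩
    obtain ⟨j, hj⟩ := hmem
    exact ⟨j, hj.symm⟩
  choose π hπ using hex
  have hπinj : Function.Injective π := by
    intro i j h
    apply c.inj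
    apply g.toEquiv.injective
    show (g : V → V) (c.f i) = (g : V → V) (c.f j)
    rw [hπ, hπ, h]
  have hstep : ∀ i, π (i + 1) = π i + 1 ∨ π i = π (i + 1) + 1 := by
    intro i
    have hmem : Sym2.map (g : V → V) s(c.f i, c.f (i + 1)) ∈ cycEdges c := by
      rw [← hfix]; exact ⟨_, mem_cycEdges c i, rfl⟩
    rw [Sym2.map_pair_eq, hπ, hπ] at hmem
    exact (edge_mem_iff c).mp hmem
  have h2ne : ∀ i : ZMod (2 * S.r), ¬ (i + 2 = i) := by
    intro i h
    exact two_nonzero hr (by linear_combination h)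
  rcases hstep 0 with hA | hB
  · left
    refine ⟨π 0, ?_⟩
    have key : ∀ m : ℕ, π (m : ZMod (2 * S.r)) = π 0 + m ∧
        π ((m : ZMod (2 * S.r)) + 1) = π 0 + m + 1 := by
      intro m
      induction m with
      | zero =>
        constructor
        · simp
        · simpa using hA
      | succ m ih =>
        have hc : ((m + 1 : ℕ) : ZMod (2 * S.r)) = (m : ZMod (2 * S.r)) + 1 := by
          push_cast; ring
        constructor
        · rw [hc, ih.2]; push_cast; ring
        · rw [hc]
          rcases hstep ((m : ZMod (2 * S.r)) + 1) with h | h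
          · rw [h, ih.2]; push_cast; ring
          · exfalso
            have hcontr : π ((m : ZMod (2 * S.r)) + 1 + 1) = π (m : ZMod (2 * S.r)) := by
              linear_combination ih.2 - h - ih.1
            exact h2ne (m : ZMod (2 * S.r)) (by linear_combination hπinj hcontr)
    intro i
    have hiv := natCast_val_eq i
    have hkey := (key i.val).1
    rw [hiv] at hkey
    rw [hπ, hkey]
    congr 1
    ring
  · right
    refine ⟨π 0, ?_⟩
    have key : ∀ m : ℕ, π (m : ZMod (2 * S.r)) = π 0 - m ∧
        π ((m : ZMod (2 * S.r)) + 1) = π 0 - m - 1 := by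
      intro m
      induction m with
      | zero =>
        constructor
        · simp
        · simp only [Nat.cast_zero, sub_zero]
          linear_combination -hB
      | succ m ih =>
        have hc : ((m + 1 : ℕ) : ZMod (2 * S.r)) = (m : ZMod (2 * S.r)) + 1 := by
          push_cast; ring
        constructor
        · rw [hc, ih.2]; push_cast; ring
        · rw [hc]
          rcases hstep ((m : ZMod (2 * S.r)) + 1) with h | h
          · exfalso
            have hcontr : π ((m : ZMod (2 * S.r)) + 1 + 1) = π (m : ZMod (2 * S.r)) := by
              linear_combination h + ih.2 - ih.1
            exact h2ne (m : ZMod (2 * S.r)) (by linear_combination hπinj hcontr)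
          · rw [show π ((m : ZMod (2*S.r)) + 1 + 1) = π ((m : ZMod (2*S.r)) + 1) - 1 by
              linear_combination - h, ih.2]
            push_cast; ring
    intro i
    have hiv := natCast_val_eq i
    have hkey := (key i.val).1
    rw [hiv] at hkey
    rw [hπ, hkey]

lemma rot_pin (hr : 4 ≤ S.r) {g : S.Γ ≃g S.Γ} (hg : g ∈ S.G)
    (c : AltCycle S.Γ S.O (2 * S.r))
    (hfix : Sym2.map (g : V → V) '' cycEdges c = cycEdges c)
    {i₀ e : ZMod (2 * S.r)} (h0 : (g : V → V) (c.f i₀) = c.f (i₀ + e))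
    (h1 : (g : V → V) (c.f (i₀ + 1)) = c.f (i₀ + e + 1)) :
    ∀ i, (g : V → V) (c.f i) = c.f (i + e) := by
  rcases dihedral hr hg c hfix with ⟨k, hk⟩ | ⟨k, hk⟩
  · have heq : i₀ + k = i₀ + e := c.inj (by rw [← hk i₀, h0])
    have hke : k = e := by linear_combination heq
    subst hke; exact hk
  · exfalso
    have e1 : k - i₀ = i₀ + e := c.inj (by rw [← hk i₀, h0])
    have e2 : k - (i₀ + 1) = i₀ + e + 1 := c.inj (by rw [← hk (i₀ + 1), h1])
    exact two_nonzero hr (by linear_combination e1 - e2)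

lemma exists_parity_index (ε : ZMod 2) : ∃ i₀ : ZMod (2 * S.r), P2 S i₀ = ε := by
  refine ⟨((ε.val : ℕ) : ZMod (2 * S.r)), ?_⟩
  rw [P2_natCast]
  exact ZMod.natCast_rightInverse ε

lemma rot_tool (hr : 4 ≤ S.r) (c0 c : AltCycle S.Γ S.O (2 * S.r)) {e : ZMod (2 * S.r)}
    (he : P2 S e = 0) :
    ∃ g : S.Γ ≃g S.Γ, g ∈ S.G ∧ (Sym2.map (g : V → V) '' cycEdges c = cycEdges c) ∧
      ∀ i, (g : V → V) (c.f i) = c.f (i + e) := by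
  obtain ⟨ε, hε⟩ := alt_parity c
  obtain ⟨i₀, hi₀⟩ := exists_parity_index (S := S) ε
  have hO1 : S.O (c.f i₀) (c.f (i₀ + 1)) := (hε i₀).mpr hi₀
  have hO2 : S.O (c.f (i₀ + e)) (c.f (i₀ + e + 1)) :=
    (hε (i₀ + e)).mpr (by rw [map_add, hi₀, he, add_zero])
  obtain ⟨g, hg, h0, h1⟩ := S.O_orbit hO1 hO2
  have hfix : Sym2.map (g : V → V) '' cycEdges c = cycEdges c := by
    refine edge_unique hr c0 (isAlt_map ⟨c, rfl⟩ g hg) ⟨c, rfl⟩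
      (e := s(c.f (i₀ + e), c.f (i₀ + e + 1))) ?_ ?_
    · exact ⟨s(c.f i₀, c.f (i₀ + 1)), mem_cycEdges c i₀, by rw [Sym2.map_pair_eq, h0, h1]⟩
    · exact mem_cycEdges c (i₀ + e)
  exact ⟨g, hg, hfix, rot_pin hr hg c hfix h0 h1⟩

lemma rot_even (hr : 4 ≤ S.r) {g : S.Γ ≃g S.Γ} (hg : g ∈ S.G)
    (c : AltCycle S.Γ S.O (2 * S.r)) {k : ZMod (2 * S.r)}
    (hk : ∀ i, (g : V → V) (c.f i) = c.f (i + k)) : P2 S k = 0 := by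
  obtain ⟨ε, hε⟩ := alt_parity c
  obtain ⟨i₀, hi₀⟩ := exists_parity_index (S := S) ε
  have hO1 : S.O (c.f i₀) (c.f (i₀ + 1)) := (hε i₀).mpr hi₀
  have hO2 := S.O_inv g hg hO1
  rw [hk, hk, show i₀ + 1 + k = i₀ + k + 1 by ring] at hO2
  have hP := (hε (i₀ + k)).mp hO2
  rw [map_add, hi₀] at hP
  linear_combination hP

lemma refl_even (hr : 4 ≤ S.r) {g : S.Γ ≃g S.Γ} (hg : g ∈ S.G)
    (c : AltCycle S.Γ S.O (2 * S.r)) {k : ZMod (2 * S.r)}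
    (hk : ∀ i, (g : V → V) (c.f i) = c.f (k - i)) : P2 S k = 0 := by
  obtain ⟨ε, hε⟩ := alt_parity c
  obtain ⟨i₀, hi₀⟩ := exists_parity_index (S := S) ε
  have hO1 : S.O (c.f i₀) (c.f (i₀ + 1)) := (hε i₀).mpr hi₀
  have hO2 := S.O_inv g hg hO1
  rw [hk, hk, show k - i₀ = (k - i₀ - 1) + 1 by ring,
    show k - (i₀ + 1) = k - i₀ - 1 by ring] at hO2
  have hne : ¬ (P2 S (k - i₀ - 1) = ε) := by
    intro hcon
    exact (S.O_choice (c.adj (k - i₀ - 1))).mp ((hε _).mpr hcon) hO2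
  rw [map_sub, map_sub, map_one, hi₀] at hne
  exact (by decide : ∀ x y : ZMod 2, ¬ (x - y - 1 = y) → x = 0) _ ε hne

end Dihedral

section Degree

open Finset in
lemma outdeg_two (v : V) : {x | S.O v x}.ncard = 2 := by
  classical
  haveI := S.finite
  haveI : Fintype V := Fintype.ofFinite V
  have hsplit : ∀ u : V, {x | S.O u x}.ncard + {x | S.O x u}.ncard = 4 := by
    intro u
    have hdisj : Disjoint {x | S.O u x} {x | S.O x u} := by
      rw [Set.disjoint_left]
      intro x hx hx'
      exact (S.O_choice (S.O_adj hx)).mp hx hx'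
    have hunion : S.Γ.neighborSet u = {x | S.O u x} ∪ {x | S.O x u} := by
      ext x
      constructor
      · intro hx
        by_cases h : S.O u x
        · exact Or.inl h
        · right
          by_contra h2
          exact h ((S.O_choice hx).mpr h2)
      · rintro (h | h)
        · exact S.O_adj h
        · exact (S.O_adj h).symm
    rw [← S.tetra u, hunion, Set.ncard_union_eq hdisj (Set.toFinite _) (Set.toFinite _)]
  have hconst : ∀ u w : V, {x | S.O u x}.ncard = {x | S.O w x}.ncard := by
    intro u w
    obtain ⟨g, hg, hgu⟩ := S.hat.1 u w
    have himg : (g : V → V) '' {x | S.O u x} = {x | S.O w x} := by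
      ext y
      constructor
      · rintro ⟨x, hx, rfl⟩
        rw [← hgu]
        exact S.O_inv g hg hx
      · intro hy
        refine ⟨(g⁻¹ : S.Γ ≃g S.Γ) y, ?_, g.toEquiv.apply_symm_apply y⟩
        rw [← hgu] at hy
        have h2 := S.O_inv _ (S.G.inv_mem hg) hy
        rwa [show ((g⁻¹ : S.Γ ≃g S.Γ) : V → V) ((g : V → V) u) = u from
          g.toEquiv.symm_apply_apply u] at h2
    rw [← himg]
    exact (Set.ncard_image_of_injective _ (fun a b h => g.toEquiv.injective h)).symm
  -- double counting
  have hncard : ∀ u : V, {x | S.O u x}.ncard = (univ.filter (fun x => S.O u x)).card := by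
    intro u
    rw [← Set.ncard_coe_finset]
    congr 1
    ext x
    simp
  have hncard' : ∀ u : V, {x | S.O x u}.ncard = (univ.filter (fun x => S.O x u)).card := by
    intro u
    rw [← Set.ncard_coe_finset]
    congr 1
    ext x
    simp
  set P : Finset (V × V) := univ.filter (fun p => S.O p.1 p.2) with hP
  have hsum1 : P.card = ∑ u : V, (univ.filter (fun x => S.O u x)).card := by
    rw [Finset.card_eq_sum_card_fiberwise (f := Prod.fst) (t := univ) (fun x _ => mem_univ _)]
    refine Finset.sum_congr rfl (fun u _ => ?_)
    have hfib : (P.filter (fun p => p.1 = u)) =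
        (univ.filter (fun x => S.O u x)).image (fun x => (u, x)) := by
      ext ⟨a, b⟩
      simp only [hP, Finset.mem_filter, Finset.mem_univ, true_and, Finset.mem_image,
        Finset.filter_filter]
      constructor
      · rintro ⟨hO, rfl⟩
        exact ⟨b, hO, rfl⟩
      · rintro ⟨x, hx, h⟩
        injection h with h1 h2
        subst h1; subst h2
        exact ⟨hx, rfl⟩
    rw [hfib, Finset.card_image_of_injective _ (fun x y h => by injection h)]
  have hsum2 : P.card = ∑ u : V, (univ.filter (fun x => S.O x u)).card := by
    rw [Finset.card_eq_sum_card_fiberwise (f := Prod.snd) (t := univ) (fun x _ => mem_univ _)]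
    refine Finset.sum_congr rfl (fun u _ => ?_)
    have hfib : (P.filter (fun p => p.2 = u)) =
        (univ.filter (fun x => S.O x u)).image (fun x => (x, u)) := by
      ext ⟨a, b⟩
      simp only [hP, Finset.mem_filter, Finset.mem_univ, true_and, Finset.mem_image,
        Finset.filter_filter]
      constructor
      · rintro ⟨hO, rfl⟩
        exact ⟨a, hO, rfl⟩
      · rintro ⟨x, hx, h⟩
        injection h with h1 h2
        subst h1; subst h2
        exact ⟨hx, rfl⟩
    rw [hfib, Finset.card_image_of_injective _ (fun x y h => by injection h)]
  have hcardpos : 0 < Fintype.card V := by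
    have : Nonempty V := S.conn.nonempty
    exact Fintype.card_pos
  have hAll : ∀ u : V, (univ.filter (fun x => S.O u x)).card = {x | S.O v x}.ncard := by
    intro u
    rw [← hncard u]
    exact hconst u v
  have hAll2 : ∀ u : V, (univ.filter (fun x => S.O x u)).card =
      4 - {x | S.O v x}.ncard := by
    intro u
    rw [← hncard' u]
    have h1 := hsplit u
    have h2 := hconst u v
    omega
  have hs1 : P.card = Fintype.card V * {x | S.O v x}.ncard := by
    rw [hsum1, Finset.sum_congr rfl (fun u _ => hAll u), Finset.sum_const, smul_eq_mul,
      Finset.card_univ]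
  have hs2 : P.card = Fintype.card V * (4 - {x | S.O v x}.ncard) := by
    rw [hsum2, Finset.sum_congr rfl (fun u _ => hAll2 u), Finset.sum_const, smul_eq_mul,
      Finset.card_univ]
  have heq := hs1.symm.trans hs2
  have h2 := Nat.eq_of_mul_eq_mul_left hcardpos heq
  have := hsplit v
  omega

lemma indeg_two (v : V) : {x | S.O x v}.ncard = 2 := by
  have h1 := outdeg_two (S := S) v
  have hdisj : Disjoint {x | S.O v x} {x | S.O x v} := by
    rw [Set.disjoint_left]
    intro x hx hx'
    exact (S.O_choice (S.O_adj hx)).mp hx hx'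
  have hunion : S.Γ.neighborSet v = {x | S.O v x} ∪ {x | S.O x v} := by
    ext x
    constructor
    · intro hx
      by_cases h : S.O v x
      · exact Or.inl h
      · right
        by_contra h2
        exact h ((S.O_choice hx).mpr h2)
    · rintro (h | h)
      · exact S.O_adj h
      · exact (S.O_adj h).symm
  haveI := S.finite
  have := S.tetra v
  rw [hunion, Set.ncard_union_eq hdisj (Set.toFinite _) (Set.toFinite _), h1] at this
  omega

end Degree

section Source

lemma O_prev_iff (c : AltCycle S.Γ S.O (2 * S.r)) {ε : ZMod 2}
    (hε : ∀ i, S.O (c.f i) (c.f (i + 1)) ↔ P2 S i = ε) (i : ZMod (2 * S.r)) :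
    S.O (c.f i) (c.f (i - 1)) ↔ P2 S i = ε := by
  have h1 := hε (i - 1)
  rw [show i - 1 + 1 = i by ring] at h1
  have hadj : S.Γ.Adj (c.f i) (c.f (i - 1)) := by
    have h2 := (c.adj (i - 1)).symm
    rwa [show i - 1 + 1 = i by ring] at h2
  rw [S.O_choice hadj, h1, map_sub, map_one]
  exact (by decide : ∀ x y : ZMod 2, (¬ (x - 1 = y)) ↔ x = y) _ ε

lemma src_xor (hr : 4 ≤ S.r) (c0 : AltCycle S.Γ S.O (2 * S.r))
    (c₁ c₂ : AltCycle S.Γ S.O (2 * S.r)) (hne : cycEdges c₁ ≠ cycEdges c₂)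
    {i j : ZMod (2 * S.r)} (hv : c₁.f i = c₂.f j) :
    (S.O (c₁.f i) (c₁.f (i + 1)) ↔ ¬ S.O (c₂.f j) (c₂.f (j + 1))) := by
  haveI := S.finite
  obtain ⟨ε₁, hε₁⟩ := alt_parity c₁
  obtain ⟨ε₂, hε₂⟩ := alt_parity c₂
  have hcross : ∀ (x y : ZMod (2 * S.r)), (x = i + 1 ∨ x = i - 1) →
      (y = j + 1 ∨ y = j - 1) → c₁.f x ≠ c₂.f y := by
    intro x y hx hy hxy
    apply hne
    refine edge_unique hr c0 ⟨c₁, rfl⟩ ⟨c₂, rfl⟩ (e := s(c₁.f i, c₁.f x)) ?_ ?_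
    · rw [edge_mem_iff]
      rcases hx with rfl | rfl
      · exact Or.inl rfl
      · right; ring
    · rw [hv, hxy, edge_mem_iff]
      rcases hy with rfl | rfl
      · exact Or.inl rfl
      · right; ring
  have hin1 : c₁.f (i + 1) ≠ c₁.f (i - 1) := by
    intro h
    exact two_nonzero hr (by linear_combination c₁.inj h)
  have hin2 : c₂.f (j + 1) ≠ c₂.f (j - 1) := by
    intro h
    exact two_nonzero hr (by linear_combination c₂.inj h)
  have hcard : ({c₁.f (i+1), c₁.f (i-1), c₂.f (j+1), c₂.f (j-1)} : Set V).ncard = 4 := by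
    rw [Set.ncard_insert_of_notMem, Set.ncard_insert_of_notMem,
      Set.ncard_insert_of_notMem, Set.ncard_singleton]
    · simp only [Set.mem_singleton_iff]
      exact hin2
    · simp only [Set.mem_insert_iff, Set.mem_singleton_iff]
      push_neg
      exact ⟨hcross _ _ (Or.inr rfl) (Or.inl rfl), hcross _ _ (Or.inr rfl) (Or.inr rfl)⟩
    · simp only [Set.mem_insert_iff, Set.mem_singleton_iff]
      push_neg
      exact ⟨hin1, hcross _ _ (Or.inl rfl) (Or.inl rfl), hcross _ _ (Or.inl rfl) (Or.inr rfl)⟩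
  have hnotboth : ¬ (S.O (c₁.f i) (c₁.f (i + 1)) ∧ S.O (c₂.f j) (c₂.f (j + 1))) := by
    rintro ⟨h1, h2⟩
    have hsub : ({c₁.f (i+1), c₁.f (i-1), c₂.f (j+1), c₂.f (j-1)} : Set V) ⊆
        {x | S.O (c₁.f i) x} := by
      rintro x (rfl | rfl | rfl | rfl)
      · exact h1
      · exact (O_prev_iff c₁ hε₁ i).mpr ((hε₁ i).mp h1)
      · rw [hv]; exact h2
      · rw [hv]; exact (O_prev_iff c₂ hε₂ j).mpr ((hε₂ j).mp h2)
    have hle := Set.ncard_le_ncard hsub (Set.toFinite _)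
    rw [hcard, outdeg_two] at hle
    omega
  have hnotneither : ¬ (¬ S.O (c₁.f i) (c₁.f (i + 1)) ∧ ¬ S.O (c₂.f j) (c₂.f (j + 1))) := by
    rintro ⟨h1, h2⟩
    have hadj1 : S.Γ.Adj (c₁.f i) (c₁.f (i - 1)) := by
      have h2' := (c₁.adj (i - 1)).symm
      rwa [show i - 1 + 1 = i by ring] at h2'
    have hadj2 : S.Γ.Adj (c₂.f j) (c₂.f (j - 1)) := by
      have h2' := (c₂.adj (j - 1)).symm
      rwa [show j - 1 + 1 = j by ring] at h2'
    have hp1 : ¬ S.O (c₁.f i) (c₁.f (i - 1)) := fun hcon =>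
      h1 ((hε₁ i).mpr ((O_prev_iff c₁ hε₁ i).mp hcon))
    have hp2 : ¬ S.O (c₂.f j) (c₂.f (j - 1)) := fun hcon =>
      h2 ((hε₂ j).mpr ((O_prev_iff c₂ hε₂ j).mp hcon))
    have hsub : ({c₁.f (i+1), c₁.f (i-1), c₂.f (j+1), c₂.f (j-1)} : Set V) ⊆
        {x | S.O x (c₁.f i)} := by
      rintro x (rfl | rfl | rfl | rfl)
      · by_contra hcon
        exact h1 ((S.O_choice (c₁.adj i)).mpr hcon)
      · by_contra hcon
        exact hp1 ((S.O_choice hadj1).mpr hcon)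
      · rw [hv]
        by_contra hcon
        exact h2 ((S.O_choice (c₂.adj j)).mpr hcon)
      · rw [hv]
        by_contra hcon
        exact hp2 ((S.O_choice hadj2).mpr hcon)
    have hle := Set.ncard_le_ncard hsub (Set.toFinite _)
    rw [hcard, indeg_two] at hle
    omega
  tauto

end Source

section Positions

/-- Translate of a set of residues. -/
def trs {n : ℕ} (A : Set (ZMod n)) (s : ZMod n) : Set (ZMod n) := (· + s) '' A

lemma mem_trs {n : ℕ} {A : Set (ZMod n)} {s i : ZMod n} : i ∈ trs A s ↔ i - s ∈ A := by
  constructor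
  · rintro ⟨a, ha, rfl⟩
    simpa using ha
  · intro h
    exact ⟨i - s, h, by ring⟩

lemma trs_zero {n : ℕ} (A : Set (ZMod n)) : trs A 0 = A := by
  ext i; rw [mem_trs, sub_zero]

lemma trs_trs {n : ℕ} (A : Set (ZMod n)) (s t : ZMod n) :
    trs (trs A s) t = trs A (s + t) := by
  ext i; rw [mem_trs, mem_trs, mem_trs]
  congr! 1
  ring

lemma trs_cancel {n : ℕ} {A B : Set (ZMod n)} {s : ZMod n} (h : trs A s = trs B s) :
    A = B := by
  have := congrArg (fun X => trs X (-s)) h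
  simpa [trs_trs, trs_zero] using this

lemma ncard_trs {n : ℕ} (A : Set (ZMod n)) (s : ZMod n) : (trs A s).ncard = A.ncard :=
  Set.ncard_image_of_injective _ (add_left_injective s)

lemma P2_even (m : ℕ) : P2 S ((2 * m : ℕ) : ZMod (2 * S.r)) = 0 := by
  have h20 : (2 : ZMod 2) = 0 := by decide
  rw [P2_natCast]
  push_cast
  rw [h20]
  ring

/-- Positions (on the cycle `c`) of the attachment set through the `j`-th vertex. -/
def Q (c : AltCycle S.Γ S.O (2 * S.r)) (j : ZMod (2 * S.r)) : Set (ZMod (2 * S.r)) :=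
  {i | c.f i ∈ blockOf S (c.f j)}

lemma self_mem_Q (c : AltCycle S.Γ S.O (2 * S.r)) (j : ZMod (2 * S.r)) : j ∈ Q c j :=
  mem_blockOf_self _

lemma Q_eq_of_mem {c : AltCycle S.Γ S.O (2 * S.r)} {i j : ZMod (2 * S.r)}
    (h : i ∈ Q c j) : Q c i = Q c j := by
  unfold Q
  rw [blockOf_eq_of_mem h]

lemma f_image_Q (c : AltCycle S.Γ S.O (2 * S.r)) (j : ZMod (2 * S.r)) :
    c.f '' Q c j = blockOf S (c.f j) := by
  ext b
  constructor
  · rintro ⟨i, hi, rfl⟩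
    exact hi
  · intro hb
    have hb' : b ∈ cycVerts c := by
      rw [← suppOf_cycEdges]
      exact blockOf_subset (cyc_mem_cyclesAt c (mem_cycVerts c j)) hb
    obtain ⟨i, rfl⟩ := hb'
    exact ⟨i, hb, rfl⟩

lemma ncard_Q (c : AltCycle S.Γ S.O (2 * S.r)) (j : ZMod (2 * S.r)) :
    (Q c j).ncard = S.att := by
  rw [← ncard_blockOf (S := S) (c.f j), ← f_image_Q c j,
    Set.ncard_image_of_injective _ c.inj]

lemma Q_step (hr : 4 ≤ S.r) (c0 c : AltCycle S.Γ S.O (2 * S.r)) (j : ZMod (2 * S.r)) :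
    Q c (j + 2) = trs (Q c j) 2 := by
  have h2 : P2 S (2 : ZMod (2 * S.r)) = 0 := by
    have h21 : ((2 * 1 : ℕ) : ZMod (2 * S.r)) = (2 : ZMod (2 * S.r)) := by push_cast; ring
    rw [← h21]
    exact P2_even 1
  obtain ⟨h, hh, -, hrot⟩ := rot_tool hr c0 c h2
  ext i
  rw [mem_trs]
  show c.f i ∈ blockOf S (c.f (j + 2)) ↔ c.f (i - 2) ∈ blockOf S (c.f j)
  rw [← hrot j, blockOf_map h hh]
  constructor
  · rintro ⟨b, hb, hbeq⟩
    have hb' : b ∈ cycVerts c := by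
      rw [← suppOf_cycEdges]
      exact blockOf_subset (cyc_mem_cyclesAt c (mem_cycVerts c j)) hb
    obtain ⟨i', rfl⟩ := hb'
    rw [hrot i'] at hbeq
    have : i' + 2 = i := c.inj hbeq
    rwa [show i - 2 = i' by linear_combination - this]
  · intro hmem
    exact ⟨c.f (i - 2), hmem, by rw [hrot (i - 2)]; congr 1; ring⟩

lemma Q_chain (hr : 4 ≤ S.r) (c0 c : AltCycle S.Γ S.O (2 * S.r)) (j : ZMod (2 * S.r))
    {s : ZMod (2 * S.r)} (hs : P2 S s = 0) :
    Q c (j + s) = trs (Q c j) s := by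
  obtain ⟨m, rfl⟩ := even_rep hs
  induction m with
  | zero => simpa using (trs_zero (Q c j)).symm
  | succ m ih =>
    have hc : ((2 * (m + 1) : ℕ) : ZMod (2 * S.r)) = ((2 * m : ℕ) : ZMod (2 * S.r)) + 2 := by
      push_cast; ring
    rw [hc, ← add_assoc, Q_step hr c0 c, ih (P2_even m), trs_trs]

end Positions

section Stab

/-- Even stabilizer of the position set of a block. -/
def Hst (c : AltCycle S.Γ S.O (2 * S.r)) (j : ZMod (2 * S.r)) : Set (ZMod (2 * S.r)) :=
  {s | P2 S s = 0 ∧ trs (Q c j) s = Q c j}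

lemma zero_mem_Hst (c : AltCycle S.Γ S.O (2 * S.r)) (j : ZMod (2 * S.r)) :
    0 ∈ Hst c j := ⟨map_zero _, trs_zero _⟩

lemma add_mem_Hst {c : AltCycle S.Γ S.O (2 * S.r)} {j s t : ZMod (2 * S.r)}
    (hs : s ∈ Hst c j) (ht : t ∈ Hst c j) : s + t ∈ Hst c j :=
  ⟨by rw [map_add, hs.1, ht.1, add_zero], by rw [← trs_trs, hs.2, ht.2]⟩

lemma neg_mem_Hst {c : AltCycle S.Γ S.O (2 * S.r)} {j s : ZMod (2 * S.r)}
    (hs : s ∈ Hst c j) : -s ∈ Hst c j := by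
  refine ⟨by rw [map_neg, hs.1, neg_zero], ?_⟩
  have h1 := congrArg (fun X => trs X (-s)) hs.2
  simp only [trs_trs, add_neg_cancel, trs_zero] at h1
  exact h1.symm

/-- `Hst` as an additive subgroup. -/
def HstGrp (c : AltCycle S.Γ S.O (2 * S.r)) (j : ZMod (2 * S.r)) :
    AddSubgroup (ZMod (2 * S.r)) where
  carrier := Hst c j
  zero_mem' := zero_mem_Hst c j
  add_mem' := fun hs ht => add_mem_Hst hs ht
  neg_mem' := fun hs => neg_mem_Hst hs

lemma Hst_card_smul {c : AltCycle S.Γ S.O (2 * S.r)} {j s : ZMod (2 * S.r)}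
    (hs : s ∈ Hst c j) : ((Hst c j).ncard) • s = 0 := by
  have hcard : (Hst c j).ncard = Nat.card (HstGrp c j) := by
    rw [← Nat.card_coe_set_eq]
    rfl
  have h1 : Nat.card (HstGrp c j) • (⟨s, hs⟩ : HstGrp c j) = 0 := by
    haveI : Fintype (HstGrp c j) := Fintype.ofFinite _
    rw [Nat.card_eq_fintype_card]
    exact card_nsmul_eq_zero
  have h2 := congrArg (fun x : HstGrp c j => (x : ZMod (2 * S.r))) h1
  simp only [AddSubgroupClass.coe_nsmul] at h2
  rw [hcard]
  exact h2

/-- The canonical candidate set: even solutions of `t • s = 0`. -/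
def Kset (S : Setup V) (t : ℕ) : Set (ZMod (2 * S.r)) :=
  {s | P2 S s = 0 ∧ (t : ZMod (2 * S.r)) * s = 0}

lemma Hst_subset_Kset {c : AltCycle S.Γ S.O (2 * S.r)} {j : ZMod (2 * S.r)} {t : ℕ}
    (h : (Hst c j).ncard = t) : Hst c j ⊆ Kset S t := by
  intro s hs
  refine ⟨hs.1, ?_⟩
  have h1 := Hst_card_smul hs
  rw [h, nsmul_eq_mul] at h1
  exact h1

lemma even_rep' {s : ZMod (2 * S.r)} (hs : P2 S s = 0) :
    ∃ m : ℕ, m < S.r ∧ s = ((2 * m : ℕ) : ZMod (2 * S.r)) := by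
  have hv := natCast_val_eq s
  have h2 : ((s.val : ℕ) : ZMod 2) = 0 := by
    rw [← P2_natCast (S := S), hv]; exact hs
  have hdvd : (2 : ℕ) ∣ s.val := by
    rwa [ZMod.natCast_eq_zero_iff] at h2
  have hlt : s.val < 2 * S.r := ZMod.val_lt s
  obtain ⟨m, hm⟩ := hdvd
  exact ⟨m, by omega, by rw [← hm, hv]⟩

lemma Kset_ncard_le (t : ℕ) (ht : 0 < t) : (Kset S t).ncard ≤ t := by
  classical
  have hr0 := S.r_pos
  set g := Nat.gcd t S.r with hg
  have hg0 : 0 < g := Nat.gcd_pos_of_pos_left _ ht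
  have hgr : g ∣ S.r := Nat.gcd_dvd_right t S.r
  have hgt : g ∣ t := Nat.gcd_dvd_left t S.r
  have hsub : Kset S t ⊆ (fun i : ℕ => ((2 * (S.r / g) * i : ℕ) : ZMod (2 * S.r))) ''
      ↑(Finset.range g) := by
    rintro s ⟨hpar, hmul⟩
    obtain ⟨m, hmr, rfl⟩ := even_rep' hpar
    have hcast : ((t * (2 * m) : ℕ) : ZMod (2 * S.r)) = 0 := by
      push_cast
      rw [← mul_assoc]
      push_cast at hmul
      linear_combination hmul
    rw [ZMod.natCast_eq_zero_iff] at hcast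
    obtain ⟨k, hk⟩ := hcast
    have hdvd : S.r ∣ t * m := by
      refine ⟨k, ?_⟩
      have h2 : 2 * (t * m) = 2 * (S.r * k) := by ring_nf; ring_nf at hk; omega
      omega
    have hco : Nat.Coprime (S.r / g) (t / g) :=
      (Nat.coprime_div_gcd_div_gcd (by rwa [hg] at hg0)).symm
    have hdvd2 : (S.r / g) ∣ m := by
      have h1 : (S.r / g) ∣ (t / g) * m := by
        obtain ⟨u, hu⟩ := hdvd
        refine ⟨u, ?_⟩
        apply Nat.eq_of_mul_eq_mul_left hg0
        have e1 : g * (t / g * m) = (g * (t / g)) * m := by ring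
        have e2 : g * (S.r / g * u) = (g * (S.r / g)) * u := by ring
        rw [e1, e2, Nat.mul_div_cancel' hgt, Nat.mul_div_cancel' hgr, hu]
      exact Nat.Coprime.dvd_of_dvd_mul_left hco h1
    obtain ⟨i, rfl⟩ := hdvd2
    refine ⟨i, ?_, ?_⟩
    · simp only [Finset.coe_range, Set.mem_Iio]
      have hrg0 : 0 < S.r / g := Nat.div_pos (Nat.le_of_dvd hr0 hgr) hg0
      have : S.r / g * g = S.r := Nat.div_mul_cancel hgr
      by_contra hcon
      push_neg at hcon
      nlinarith
    · congr 1
      ring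
  calc (Kset S t).ncard ≤ _ := Set.ncard_le_ncard hsub (Set.toFinite _)
    _ ≤ (↑(Finset.range g) : Set ℕ).ncard := Set.ncard_image_le (Set.toFinite _)
    _ = g := by rw [Set.ncard_coe_finset, Finset.card_range]
    _ ≤ t := Nat.gcd_le_left _ ht

lemma Kset_two (hr : 4 ≤ S.r) :
    Kset S 2 ⊆ {0, ((S.r : ℕ) : ZMod (2 * S.r))} := by
  rintro s ⟨hpar, hmul⟩
  have h2 : s + s = 0 := by linear_combination hmul
  rcases two_smul_zero h2 with h | h
  · exact Or.inl h
  · exact Or.inr h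

lemma Hst_bij (hr : 4 ≤ S.r) (c0 c : AltCycle S.Γ S.O (2 * S.r)) (j : ZMod (2 * S.r)) :
    (fun s => j + s) '' Hst c j = {i | i ∈ Q c j ∧ P2 S i = P2 S j} := by
  ext i
  constructor
  · rintro ⟨s, ⟨hs1, hs2⟩, rfl⟩
    constructor
    · rw [← hs2, mem_trs]
      simpa using self_mem_Q c j
    · rw [map_add, hs1, add_zero]
  · rintro ⟨hiQ, hip⟩
    have hpar : P2 S (i - j) = 0 := by rw [map_sub, hip, sub_self]
    refine ⟨i - j, ⟨hpar, ?_⟩, by ring⟩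
    rw [← Q_chain hr c0 c j hpar, show j + (i - j) = i by ring]
    exact Q_eq_of_mem hiQ

lemma ncard_Hst (hr : 4 ≤ S.r) (c0 c : AltCycle S.Γ S.O (2 * S.r)) (j : ZMod (2 * S.r)) :
    (Hst c j).ncard = {i | i ∈ Q c j ∧ P2 S i = P2 S j}.ncard := by
  rw [← Hst_bij hr c0 c j, Set.ncard_image_of_injective _ (add_right_injective j)]

/-- The block through position `j` contains positions of both parities. -/
def MixedQ (c : AltCycle S.Γ S.O (2 * S.r)) (j : ZMod (2 * S.r)) : Prop :=
  ∃ i ∈ Q c j, P2 S i ≠ P2 S j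

lemma Hst_unmixed_ncard (hr : 4 ≤ S.r) (c0 c : AltCycle S.Γ S.O (2 * S.r))
    (j : ZMod (2 * S.r)) (h : ¬ MixedQ c j) : (Hst c j).ncard = S.att := by
  rw [ncard_Hst hr c0 c j]
  have heq : {i | i ∈ Q c j ∧ P2 S i = P2 S j} = Q c j := by
    ext i
    constructor
    · exact fun h => h.1
    · intro hi
      refine ⟨hi, ?_⟩
      by_contra hcon
      exact h ⟨i, hi, hcon⟩
  rw [heq, ncard_Q]

lemma Hst_eq_Kset_unmixed (hr : 4 ≤ S.r) (c0 c : AltCycle S.Γ S.O (2 * S.r))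
    (j : ZMod (2 * S.r)) (h : ¬ MixedQ c j) : Hst c j = Kset S S.att := by
  refine Set.eq_of_subset_of_ncard_le
    (Hst_subset_Kset (Hst_unmixed_ncard hr c0 c j h)) ?_ (Set.toFinite _)
  rw [Hst_unmixed_ncard hr c0 c j h]
  exact Kset_ncard_le S.att S.att_pos

lemma Hst_congr {c : AltCycle S.Γ S.O (2 * S.r)} {i j : ZMod (2 * S.r)}
    (h : i ∈ Q c j) : Hst c i = Hst c j := by
  unfold Hst
  rw [Q_eq_of_mem h]

lemma Hst_shift (hr : 4 ≤ S.r) (c0 c : AltCycle S.Γ S.O (2 * S.r)) (j : ZMod (2 * S.r))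
    {s : ZMod (2 * S.r)} (hs : P2 S s = 0) : Hst c (j + s) = Hst c j := by
  unfold Hst
  rw [Q_chain hr c0 c j hs]
  ext t
  simp only [Set.mem_setOf_eq]
  constructor
  · rintro ⟨ht1, ht2⟩
    refine ⟨ht1, trs_cancel (s := s) ?_⟩
    rw [trs_trs, add_comm t s, ← trs_trs]
    exact ht2
  · rintro ⟨ht1, ht2⟩
    exact ⟨ht1, by rw [trs_trs, add_comm s t, ← trs_trs, ht2]⟩

lemma Hst_parity_eq (hr : 4 ≤ S.r) (c0 c : AltCycle S.Γ S.O (2 * S.r))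
    {j j' : ZMod (2 * S.r)} (hp : P2 S j' = P2 S j) : Hst c j' = Hst c j := by
  have h1 : j' = j + (j' - j) := by ring
  rw [h1, Hst_shift hr c0 c j (by rw [map_sub, hp, sub_self])]

lemma Hst_uniform (hr : 4 ≤ S.r) (c0 c : AltCycle S.Γ S.O (2 * S.r))
    (j j' : ZMod (2 * S.r)) : Hst c j = Hst c j' := by
  have hres : ∀ a b d : ZMod 2, a ≠ b → ¬ (b = d) → a = d := by decide
  by_cases hp : P2 S j = P2 S j'
  · exact (Hst_parity_eq hr c0 c hp.symm).symm
  · by_cases hm : MixedQ c j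
    · obtain ⟨i₀, hi₀Q, hi₀p⟩ := hm
      rw [← Hst_congr hi₀Q]
      exact Hst_parity_eq hr c0 c (hres _ _ _ hi₀p hp)
    · by_cases hm' : MixedQ c j'
      · obtain ⟨i₀, hi₀Q, hi₀p⟩ := hm'
        rw [← Hst_congr hi₀Q]
        have h2 : P2 S i₀ = P2 S j := hres _ _ _ hi₀p (fun hcon => hp hcon.symm)
        exact (Hst_parity_eq hr c0 c h2).symm
      · rw [Hst_eq_Kset_unmixed hr c0 c j hm, Hst_eq_Kset_unmixed hr c0 c j' hm']

end Stab

section Utility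

lemma mapE_mul (g h : S.Γ ≃g S.Γ) (E : Set (Sym2 V)) :
    Sym2.map ((g * h : S.Γ ≃g S.Γ) : V → V) '' E =
      Sym2.map (g : V → V) '' (Sym2.map (h : V → V) '' E) := by
  rw [← Set.image_comp]
  have hc : Sym2.map ((g * h : S.Γ ≃g S.Γ) : V → V) =
      Sym2.map (g : V → V) ∘ Sym2.map (h : V → V) := by
    funext e
    rw [Function.comp_apply, Sym2.map_map]
    rfl
  rw [hc]

lemma mapE_pow_fix {h : S.Γ ≃g S.Γ} {E : Set (Sym2 V)}
    (hfix : Sym2.map (h : V → V) '' E = E) (m : ℕ) :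
    Sym2.map ((h ^ m : S.Γ ≃g S.Γ) : V → V) '' E = E := by
  induction m with
  | zero =>
    have h1 : Sym2.map ((h ^ 0 : S.Γ ≃g S.Γ) : V → V) = id := by
      funext e
      have : ((h ^ 0 : S.Γ ≃g S.Γ) : V → V) = id := rfl
      rw [this, Sym2.map_id]
    rw [h1, Set.image_id]
  | succ m ih =>
    rw [pow_succ, mapE_mul, hfix, ih]

lemma pow_rot {c : AltCycle S.Γ S.O (2 * S.r)} {h : S.Γ ≃g S.Γ} {e : ZMod (2 * S.r)}
    (hrot : ∀ i, (h : V → V) (c.f i) = c.f (i + e)) (m : ℕ) :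
    ∀ i, ((h ^ m : S.Γ ≃g S.Γ) : V → V) (c.f i) = c.f (i + m • e) := by
  induction m with
  | zero => intro i; simp
  | succ m ih =>
    intro i
    rw [pow_succ]
    show ((h ^ m : S.Γ ≃g S.Γ) : V → V) ((h : V → V) (c.f i)) = _
    rw [hrot i, ih (i + e)]
    congr 1
    rw [succ_nsmul]
    ring

lemma image_id_of_pointwise {f : V → V} {B : Set V} (h : ∀ b ∈ B, f b = b) :
    f '' B = B := by
  ext x
  constructor
  · rintro ⟨b, hb, rfl⟩
    rwa [h b hb]
  · intro hx
    exact ⟨x, hx, h x hx⟩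

lemma Kset_rep {t : ℕ} (ht : 0 < t) {s : ZMod (2 * S.r)} (hs : s ∈ Kset S t) :
    ∃ i : ℕ, i < Nat.gcd t S.r ∧
      s = ((2 * (S.r / Nat.gcd t S.r) * i : ℕ) : ZMod (2 * S.r)) := by
  obtain ⟨hpar, hmul⟩ := hs
  have hr0 := S.r_pos
  set g := Nat.gcd t S.r with hg
  have hg0 : 0 < g := Nat.gcd_pos_of_pos_left _ ht
  have hgr : g ∣ S.r := Nat.gcd_dvd_right t S.r
  have hgt : g ∣ t := Nat.gcd_dvd_left t S.r
  obtain ⟨m, hmr, rfl⟩ := even_rep' hpar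
  have hcast : ((t * (2 * m) : ℕ) : ZMod (2 * S.r)) = 0 := by
    push_cast
    rw [← mul_assoc]
    push_cast at hmul
    linear_combination hmul
  rw [ZMod.natCast_eq_zero_iff] at hcast
  obtain ⟨k, hk⟩ := hcast
  have hdvd : S.r ∣ t * m := by
    refine ⟨k, ?_⟩
    have h2 : 2 * (t * m) = 2 * (S.r * k) := by ring_nf; ring_nf at hk; omega
    omega
  have hco : Nat.Coprime (S.r / g) (t / g) :=
    (Nat.coprime_div_gcd_div_gcd (by rwa [hg] at hg0)).symm
  have hdvd2 : (S.r / g) ∣ m := by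
    have h1 : (S.r / g) ∣ (t / g) * m := by
      obtain ⟨u, hu⟩ := hdvd
      refine ⟨u, ?_⟩
      apply Nat.eq_of_mul_eq_mul_left hg0
      have e1 : g * (t / g * m) = (g * (t / g)) * m := by ring
      have e2 : g * (S.r / g * u) = (g * (S.r / g)) * u := by ring
      rw [e1, e2, Nat.mul_div_cancel' hgt, Nat.mul_div_cancel' hgr, hu]
    exact Nat.Coprime.dvd_of_dvd_mul_left hco h1
  obtain ⟨i, rfl⟩ := hdvd2
  refine ⟨i, ?_, ?_⟩
  · have hrg0 : 0 < S.r / g := Nat.div_pos (Nat.le_of_dvd hr0 hgr) hg0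
    have hmul2 : S.r / g * g = S.r := Nat.div_mul_cancel hgr
    by_contra hcon
    push_neg at hcon
    nlinarith
  · congr 1
    ring

lemma ncard_Hst_pos (c : AltCycle S.Γ S.O (2 * S.r)) (j : ZMod (2 * S.r)) :
    0 < (Hst c j).ncard :=
  (Set.ncard_pos (Set.toFinite _)).mpr ⟨0, zero_mem_Hst c j⟩

lemma Hst_eq_Kset (c : AltCycle S.Γ S.O (2 * S.r)) (j : ZMod (2 * S.r)) :
    Hst c j = Kset S ((Hst c j).ncard) :=
  Set.eq_of_subset_of_ncard_le (Hst_subset_Kset rfl)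
    (Kset_ncard_le _ (ncard_Hst_pos c j)) (Set.toFinite _)

lemma three_distinct {α : Type*} {B : Set α} (hfin : B.Finite) (h3 : 3 ≤ B.ncard) :
    ∃ a b c, a ∈ B ∧ b ∈ B ∧ c ∈ B ∧ a ≠ b ∧ a ≠ c ∧ b ≠ c := by
  obtain ⟨a, ha⟩ := (Set.ncard_pos hfin).mp (by omega)
  have h1 : 2 ≤ (B \ {a}).ncard := by
    rw [Set.ncard_diff_singleton_of_mem ha]
    omega
  have hpos1 : 0 < (B \ {a}).ncard := by omega
  obtain ⟨b, hb⟩ := (Set.ncard_pos hfin.diff).mp hpos1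
  have h2 : 1 ≤ ((B \ {a}) \ {b}).ncard := by
    rw [Set.ncard_diff_singleton_of_mem hb]
    omega
  have hpos2 : 0 < ((B \ {a}) \ {b}).ncard := by omega
  obtain ⟨c, hc⟩ := (Set.ncard_pos hfin.diff.diff).mp hpos2
  obtain ⟨hbB, hba⟩ := hb
  obtain ⟨⟨hcB, hca⟩, hcb⟩ := hc
  refine ⟨a, b, c, ha, hbB, hcB, ?_, ?_, ?_⟩
  · intro h; exact hba (by rw [← h]; rfl)
  · intro h; exact hca (by rw [← h]; rfl)
  · intro h; exact hcb (by rw [← h]; rfl)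

lemma pointwise_id_of_fix_three (hr : 4 ≤ S.r) {φ : S.Γ ≃g S.Γ} (hφ : φ ∈ S.G)
    (Y : AltCycle S.Γ S.O (2 * S.r))
    (hfixY : Sym2.map (φ : V → V) '' cycEdges Y = cycEdges Y)
    {B : Set (ZMod (2 * S.r))} (hBsub : ∀ q ∈ B, (φ : V → V) (Y.f q) = Y.f q)
    (hBcard : 3 ≤ B.ncard) :
    ∀ i, (φ : V → V) (Y.f i) = Y.f i := by
  rcases dihedral hr hφ Y hfixY with ⟨k, hk⟩ | ⟨k, hk⟩
  · obtain ⟨q, hq⟩ : B.Nonempty := (Set.ncard_pos (Set.toFinite _)).mp (by omega)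
    have h1 : q + k = q := Y.inj (by rw [← hk q, hBsub q hq])
    have hk0 : k = 0 := by linear_combination h1
    intro i
    rw [hk i, hk0, add_zero]
  · exfalso
    obtain ⟨a, b, c', ha, hb, hc, hab, hac, hbc⟩ :=
      three_distinct (Set.toFinite B) hBcard
    have hsol : ∀ q ∈ B, q + q = k := by
      intro q hq
      have h1 : k - q = q := Y.inj (by rw [← hk q, hBsub q hq])
      linear_combination - h1
    have h2 : (a - b) + (a - b) = 0 := by
      linear_combination hsol a ha - hsol b hb
    have h3 : (a - c') + (a - c') = 0 := by
      linear_combination hsol a ha - hsol c' hc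
    rcases two_smul_zero h2 with h | h
    · exact hab (by linear_combination h)
    · rcases two_smul_zero h3 with h' | h'
      · exact hac (by linear_combination h')
      · exact hbc (by linear_combination h' - h)

end Utility

section RotLemma

lemma P2_two : P2 S (2 : ZMod (2 * S.r)) = 0 := by
  have h21 : ((2 * 1 : ℕ) : ZMod (2 * S.r)) = (2 : ZMod (2 * S.r)) := by push_cast; ring
  rw [← h21]
  exact P2_even 1

/-- An element of `G` fixing an alternating cycle and all attachment sets on it acts on
it as an (even) rotation whose amount stabilizes every block. -/
lemma rot_of_fix_all (hr : 4 ≤ S.r) (har : S.att < S.r)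
    (c0 : AltCycle S.Γ S.O (2 * S.r)) {g : S.Γ ≃g S.Γ} (hg : g ∈ S.G)
    (c : AltCycle S.Γ S.O (2 * S.r))
    (hfix : Sym2.map (g : V → V) '' cycEdges c = cycEdges c)
    (hblocks : ∀ i, (g : V → V) '' blockOf S (c.f i) = blockOf S (c.f i)) :
    ∃ k, (∀ i, (g : V → V) (c.f i) = c.f (i + k)) ∧ k ∈ Hst c 0 := by
  rcases dihedral hr hg c hfix with ⟨k, hk⟩ | ⟨k, hk⟩
  · refine ⟨k, hk, ?_⟩
    have hke : P2 S k = 0 := rot_even hr hg c hk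
    refine ⟨hke, ?_⟩
    have h1 : blockOf S (c.f (0 + k)) = blockOf S (c.f 0) := by
      rw [← hk 0, blockOf_map g hg, hblocks 0]
    have h2 : Q c (0 + k) = Q c 0 := by
      unfold Q
      rw [h1]
    rw [← Q_chain hr c0 c 0 hke, h2]
  · exfalso
    have hke : P2 S k = 0 := refl_even hr hg c hk
    have hmem : ∀ j, (k - 2 * j) ∈ Hst c j := by
      intro j
      have hpar : P2 S (k - 2 * j) = 0 := by
        rw [map_sub, hke, map_mul, P2_two, zero_mul, sub_zero]
      refine ⟨hpar, ?_⟩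
      have h1 : blockOf S (c.f (k - j)) = blockOf S (c.f j) := by
        rw [← hk j, blockOf_map g hg, hblocks j]
      have h2 : Q c (k - j) = Q c j := by
        unfold Q
        rw [h1]
      have h3 : Q c (j + (k - 2 * j)) = trs (Q c j) (k - 2 * j) := Q_chain hr c0 c j hpar
      rw [show j + (k - 2 * j) = k - j by ring, h2] at h3
      exact h3.symm
    have hk0 : (k - 2 * 0) ∈ Hst c 0 := hmem 0
    have hk1 : (k - 2 * 1) ∈ Hst c 0 := by
      rw [Hst_uniform hr c0 c 0 1]
      exact hmem 1
    have h2mem : (2 : ZMod (2 * S.r)) ∈ Hst c 0 := by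
      have h4 := add_mem_Hst hk0 (neg_mem_Hst hk1)
      rwa [show k - 2 * 0 + -(k - 2 * 1) = 2 by ring] at h4
    have horb : ∀ m : ℕ, ((2 * m : ℕ) : ZMod (2 * S.r)) ∈ Q c 0 := by
      intro m
      induction m with
      | zero => simpa using self_mem_Q c 0
      | succ m ih =>
        have h2' := h2mem.2
        rw [← h2', mem_trs]
        rwa [show ((2 * (m + 1) : ℕ) : ZMod (2 * S.r)) - 2 =
          ((2 * m : ℕ) : ZMod (2 * S.r)) by push_cast; ring]
    have hinj : Set.InjOn (fun m : ℕ => ((2 * m : ℕ) : ZMod (2 * S.r)))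
        ↑(Finset.range S.r) := by
      intro a ha b hb hab
      simp only [Finset.coe_range, Set.mem_Iio] at ha hb
      have hab' : ((2 * a : ℕ) : ZMod (2 * S.r)) = ((2 * b : ℕ) : ZMod (2 * S.r)) := hab
      have h1 : (2 * a) % (2 * S.r) = (2 * b) % (2 * S.r) := by
        rw [← ZMod.val_natCast, ← ZMod.val_natCast, hab']
      rw [Nat.mod_eq_of_lt (by omega), Nat.mod_eq_of_lt (by omega)] at h1
      omega
    have hsub : (fun m : ℕ => ((2 * m : ℕ) : ZMod (2 * S.r))) '' ↑(Finset.range S.r) ⊆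
        Q c 0 := by
      rintro x ⟨m, _, rfl⟩
      exact horb m
    have hcard := Set.ncard_le_ncard hsub (Set.toFinite _)
    rw [Set.ncard_image_of_injOn hinj, Set.ncard_coe_finset, Finset.card_range,
      ncard_Q] at hcard
    omega

end RotLemma

section StepPieces

/-- If `φ ∈ G` fixes `X` and the attachment set at a common vertex of `X` and `Y`,
then it fixes `Y`. -/
lemma neighbor_fix {X Y : AltCycle S.Γ S.O (2 * S.r)} (hEF : cycEdges X ≠ cycEdges Y)
    {v₀ : V} (hv₀X : v₀ ∈ cycVerts X) (hv₀Y : v₀ ∈ cycVerts Y)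
    {φ : S.Γ ≃g S.Γ} (hφ : φ ∈ S.G)
    (hfixX : Sym2.map (φ : V → V) '' cycEdges X = cycEdges X)
    (hfixA : (φ : V → V) '' blockOf S v₀ = blockOf S v₀) :
    Sym2.map (φ : V → V) '' cycEdges Y = cycEdges Y := by
  have hpairv : cyclesAt S v₀ = {cycEdges X, cycEdges Y} :=
    cyclesAt_eq_pair hEF (cyc_mem_cyclesAt X hv₀X) (cyc_mem_cyclesAt Y hv₀Y)
  have hv₀' : (φ : V → V) v₀ ∈ blockOf S v₀ := by
    rw [← hfixA]
    exact ⟨v₀, mem_blockOf_self v₀, rfl⟩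
  have hcyc : cyclesAt S ((φ : V → V) v₀) = {cycEdges X, cycEdges Y} := by
    rw [cyclesAt_eq_of_mem hv₀', hpairv]
  have hmemY : Sym2.map (φ : V → V) '' cycEdges Y ∈ cyclesAt S ((φ : V → V) v₀) := by
    refine ⟨isAlt_map ⟨Y, rfl⟩ φ hφ, ?_⟩
    rw [suppOf_map]
    refine ⟨v₀, ?_, rfl⟩
    rw [suppOf_cycEdges]
    exact hv₀Y
  rw [hcyc] at hmemY
  simp only [Set.mem_insert_iff, Set.mem_singleton_iff] at hmemY
  rcases hmemY with h | h
  · exfalso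
    apply hEF
    have h1 := congrArg (fun E => Sym2.map ((φ⁻¹ : S.Γ ≃g S.Γ) : V → V) '' E) h
    rw [mapE_inv_cancel, fix_inv hfixX] at h1
    exact h1.symm
  · exact h

/-- Mixed-parity attachment sets transfer between the two cycles through them. -/
lemma mixed_transfer (hr : 4 ≤ S.r) (c0 : AltCycle S.Γ S.O (2 * S.r))
    {X Y : AltCycle S.Γ S.O (2 * S.r)} (hneXY : cycEdges X ≠ cycEdges Y)
    {i₀ j₀ : ZMod (2 * S.r)} (hv : X.f i₀ = Y.f j₀) (hmix : MixedQ X i₀) :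
    MixedQ Y j₀ := by
  obtain ⟨p, hpQ, hpp⟩ := hmix
  have hblockeq : blockOf S (X.f i₀) = blockOf S (Y.f j₀) := by rw [hv]
  -- the vertex at position p lies on Y as well
  have haY : X.f p ∈ cycVerts Y := by
    rw [← suppOf_cycEdges]
    refine blockOf_subset (E := cycEdges Y) ?_ hpQ
    refine cyc_mem_cyclesAt Y ?_
    rw [hv]
    exact mem_cycVerts Y j₀
  obtain ⟨q, hq⟩ := haY
  refine ⟨q, ?_, ?_⟩
  · show Y.f q ∈ blockOf S (Y.f j₀)
    rw [hq, ← hblockeq]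
    exact hpQ
  · -- parity transfer via src_xor
    obtain ⟨εX, hεX⟩ := alt_parity X
    obtain ⟨εY, hεY⟩ := alt_parity Y
    have hkey : ∀ a b : ZMod (2 * S.r), X.f a = Y.f b →
        (S.O (X.f a) (X.f (a + 1)) ↔ ¬ S.O (Y.f b) (Y.f (b + 1))) :=
      fun a b hab => src_xor hr c0 X Y hneXY hab
    have h1 : (P2 S p = εX) ↔ ¬ (P2 S q = εY) := by
      rw [← hεX p, ← hεY q]
      exact hkey p q hq.symm
    have h2 : (P2 S i₀ = εX) ↔ ¬ (P2 S j₀ = εY) := by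
      rw [← hεX i₀, ← hεY j₀]
      exact hkey i₀ j₀ hv
    intro hcon
    have hres : ∀ a b c d eX eY : ZMod 2, ((a = eX) ↔ ¬ (b = eY)) →
        ((c = eX) ↔ ¬ (d = eY)) → (b = d) → (a = c) := by decide
    exact hpp (hres _ _ _ _ _ _ h1 h2 hcon)

/-- If `g` acts on `Y` as a rotation stabilizing one block, all blocks of `Y` are fixed. -/
lemma blocks_of_rot (hr : 4 ≤ S.r) (c0 : AltCycle S.Γ S.O (2 * S.r))
    {g : S.Γ ≃g S.Γ} (hg : g ∈ S.G) (Y : AltCycle S.Γ S.O (2 * S.r))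
    {kY : ZMod (2 * S.r)} (hpar : P2 S kY = 0)
    (hgY : ∀ i, (g : V → V) (Y.f i) = Y.f (i + kY)) {j₀ : ZMod (2 * S.r)}
    (hstab : trs (Q Y j₀) kY = Q Y j₀) :
    ∀ w ∈ suppOf (cycEdges Y), (g : V → V) '' blockOf S w = blockOf S w := by
  intro w hw
  rw [suppOf_cycEdges] at hw
  obtain ⟨q, rfl⟩ := hw
  have hkH : kY ∈ Hst Y q := by
    rw [Hst_uniform hr c0 Y q j₀]
    exact ⟨hpar, hstab⟩
  have hmemq : q + kY ∈ Q Y q := by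
    rw [← hkH.2, mem_trs]
    simpa using self_mem_Q Y q
  calc (g : V → V) '' blockOf S (Y.f q)
      = blockOf S ((g : V → V) (Y.f q)) := (blockOf_map g hg _).symm
    _ = blockOf S (Y.f (q + kY)) := by rw [hgY q]
    _ = blockOf S (Y.f q) := blockOf_eq_of_mem hmemq

end StepPieces

section Corner

lemma castr_ne_zero (hr : 4 ≤ S.r) : ((S.r : ℕ) : ZMod (2 * S.r)) ≠ 0 := by
  intro h
  rw [ZMod.natCast_eq_zero_iff] at h
  have := Nat.le_of_dvd (by omega) h
  omega

lemma corner_kill (hr : 4 ≤ S.r) (h3 : 3 ≤ S.att) (c0 : AltCycle S.Γ S.O (2 * S.r))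
    {X Y : AltCycle S.Γ S.O (2 * S.r)} (hneXY : cycEdges X ≠ cycEdges Y)
    {i₀ j₀ : ZMod (2 * S.r)} (hv : X.f i₀ = Y.f j₀)
    {h : S.Γ ≃g S.Γ} (hh : h ∈ S.G) {e₀ : ZMod (2 * S.r)} (he₀ : e₀ ≠ 0)
    (hrotX : ∀ i, (h : V → V) (X.f i) = X.f (i + e₀))
    (hAfix : (h : V → V) '' blockOf S (Y.f j₀) = blockOf S (Y.f j₀))
    (he₀Hi : e₀ ∈ Hst X i₀) (hgen : ∀ s ∈ Hst X i₀, ∃ n : ℕ, s = n • e₀)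
    {cY : ZMod (2 * S.r)} (hreflY : ∀ i, (h : V → V) (Y.f i) = Y.f (cY - i)) : False := by
  have hvX : X.f i₀ ∈ cycVerts X := mem_cycVerts X i₀
  have hAsubX : blockOf S (Y.f j₀) ⊆ cycVerts X := by
    rw [← hv]
    intro a ha
    rw [← suppOf_cycEdges]
    exact blockOf_subset (cyc_mem_cyclesAt X hvX) ha
  have h2e : e₀ + e₀ = 0 := by
    have hYY : (h : V → V) ((h : V → V) (Y.f j₀)) = Y.f j₀ := by
      rw [hreflY j₀, hreflY (cY - j₀)]
      congr 1
      ring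
    rw [← hv] at hYY
    rw [hrotX i₀, hrotX (i₀ + e₀)] at hYY
    have hX := X.inj hYY
    linear_combination hX
  have hpar_e : P2 S e₀ = 0 := rot_even hr hh X hrotX
  have he₀r : e₀ = ((S.r : ℕ) : ZMod (2 * S.r)) := by
    rcases two_smul_zero h2e with h' | h'
    · exact absurd h' he₀
    · exact h'
  have hparr : P2 S ((S.r : ℕ) : ZMod (2 * S.r)) = 0 := by
    rw [← he₀r]
    exact hpar_e
  have hpairX : Hst X i₀ = {0, ((S.r : ℕ) : ZMod (2 * S.r))} := by
    apply subset_antisymm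
    · intro s hs
      obtain ⟨n, rfl⟩ := hgen s hs
      rcases Nat.even_or_odd n with ⟨w, hw⟩ | ⟨w, hw⟩
      · left
        rw [hw, add_nsmul, ← smul_add, h2e, smul_zero]
      · right
        have hcalc : n • e₀ = (w + w) • e₀ + e₀ := by
          rw [hw]
          rw [show 2 * w + 1 = (w + w) + 1 by ring, add_nsmul, one_nsmul]
        rw [hcalc, add_nsmul, ← smul_add, h2e, smul_zero, zero_add, he₀r]
        rfl
    · rintro s hs
      simp only [Set.mem_insert_iff, Set.mem_singleton_iff] at hs
      rcases hs with rfl | rfl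
      · exact zero_mem_Hst X i₀
      · rw [← he₀r]
        exact he₀Hi
  have ht2 : (Hst X i₀).ncard = 2 := by
    rw [hpairX, Set.ncard_pair (Ne.symm (castr_ne_zero hr))]
  have hmixX : MixedQ X i₀ := by
    by_contra hcon
    have := Hst_unmixed_ncard hr c0 X i₀ hcon
    omega
  have hmixY : MixedQ Y j₀ := mixed_transfer hr c0 hneXY hv hmixX
  have hsplit : ∀ (c : AltCycle S.Γ S.O (2 * S.r)) (j j' : ZMod (2 * S.r)), j' ∈ Q c j →
      P2 S j' ≠ P2 S j → S.att = (Hst c j).ncard + (Hst c j').ncard := by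
    intro c j j' hj' hparjj
    have hQ1 : {i | i ∈ Q c j ∧ P2 S i = P2 S j} ∪ {i | i ∈ Q c j' ∧ P2 S i = P2 S j'} =
        Q c j := by
      rw [Q_eq_of_mem hj']
      ext i
      constructor
      · rintro (hcase | hcase) <;> exact hcase.1
      · intro hi
        by_cases hp : P2 S i = P2 S j
        · exact Or.inl ⟨hi, hp⟩
        · refine Or.inr ⟨hi, ?_⟩
          exact (by decide : ∀ a b d : ZMod 2, ¬ a = b → ¬ d = b → a = d) _ _ _ hp hparjj
    have hdisj : Disjoint {i | i ∈ Q c j ∧ P2 S i = P2 S j}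
        {i | i ∈ Q c j' ∧ P2 S i = P2 S j'} := by
      rw [Set.disjoint_left]
      rintro i ⟨-, hi1⟩ ⟨-, hi2⟩
      exact hparjj (by rw [← hi2, ← hi1])
    have hu := Set.ncard_union_eq hdisj (Set.toFinite _) (Set.toFinite _)
    rw [hQ1, ncard_Q] at hu
    rw [hu, ncard_Hst hr c0 c j, ncard_Hst hr c0 c j']
  obtain ⟨p', hp'Q, hp'par⟩ := hmixX
  have hatt4 : S.att = 4 := by
    have h1 := hsplit X i₀ p' hp'Q hp'par
    rw [ht2, Hst_congr hp'Q, ht2] at h1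
    omega
  obtain ⟨q', hq'Q, hq'par⟩ := hmixY
  have htY : (Hst Y j₀).ncard = 2 := by
    have h1 := hsplit Y j₀ q' hq'Q hq'par
    rw [Hst_congr hq'Q] at h1
    omega
  have hpairH : Hst Y j₀ = {0, ((S.r : ℕ) : ZMod (2 * S.r))} := by
    have hsub : Hst Y j₀ ⊆ {0, ((S.r : ℕ) : ZMod (2 * S.r))} := by
      have h1 := Hst_eq_Kset Y j₀
      rw [htY] at h1
      rw [h1]
      exact Kset_two hr
    refine Set.eq_of_subset_of_ncard_le hsub ?_ (Set.toFinite _)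
    rw [Set.ncard_pair (Ne.symm (castr_ne_zero hr)), htY]
  have hQinv : ∀ q ∈ Q Y j₀, (cY - q ∈ Q Y j₀ ∧ cY - q ≠ q ∧ P2 S (cY - q) = P2 S q) := by
    intro q hq
    have haA : Y.f q ∈ blockOf S (Y.f j₀) := hq
    refine ⟨?_, ?_, ?_⟩
    · show Y.f (cY - q) ∈ blockOf S (Y.f j₀)
      rw [← hreflY q, ← hAfix]
      exact ⟨Y.f q, haA, rfl⟩
    · obtain ⟨p, hp⟩ := hAsubX haA
      intro hcon
      have h1 : (h : V → V) (Y.f q) = Y.f q := by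
        rw [hreflY q, hcon]
      rw [← hp, hrotX p] at h1
      have h2 := X.inj h1
      apply he₀
      linear_combination h2
    · have hcpar : P2 S cY = 0 := refl_even hr hh Y hreflY
      rw [map_sub, hcpar]
      exact (by decide : ∀ x : ZMod 2, 0 - x = x) _
  have hkill : ∀ j' : ZMod (2 * S.r), j' ∈ Q Y j₀ →
      cY = 2 * j' + ((S.r : ℕ) : ZMod (2 * S.r)) := by
    intro j' hj'
    obtain ⟨hin, hne, hparq⟩ := hQinv j' hj'
    have hset : {i | i ∈ Q Y j' ∧ P2 S i = P2 S j'} = (fun s => j' + s) '' Hst Y j' :=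
      (Hst_bij hr c0 Y j').symm
    have hQeq : Q Y j' = Q Y j₀ := Q_eq_of_mem hj'
    have hHeq : Hst Y j' = Hst Y j₀ := Hst_congr hj'
    have hmem : cY - j' ∈ (fun s => j' + s) '' Hst Y j' := by
      rw [← hset]
      exact ⟨by rw [hQeq]; exact hin, hparq⟩
    rw [hHeq, hpairH] at hmem
    obtain ⟨s, hs, hseq⟩ := hmem
    have hseq' : j' + s = cY - j' := hseq
    simp only [Set.mem_insert_iff, Set.mem_singleton_iff] at hs
    rcases hs with rfl | rfl
    · exfalso
      apply hne
      linear_combination - hseq'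
    · linear_combination - hseq'
  have h1 := hkill j₀ (self_mem_Q Y j₀)
  have h2 := hkill q' hq'Q
  have h3 : (j₀ - q') + (j₀ - q') = 0 := by linear_combination h2 - h1
  rcases two_smul_zero h3 with h4 | h4
  · exact hq'par (by rw [show q' = j₀ by linear_combination - h4])
  · apply hq'par
    have h5 : P2 S (j₀ - q') = 0 := by
      rw [h4]
      exact hparr
    rw [map_sub, sub_eq_zero] at h5
    exact h5.symm

end Corner

section Step

/-- `g` fixes the edge set `E` and all attachment sets meeting it. -/
def Good (S : Setup V) (g : S.Γ ≃g S.Γ) (E : Set (Sym2 V)) : Prop :=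
  Sym2.map (g : V → V) '' E = E ∧
    ∀ v ∈ suppOf E, (g : V → V) '' blockOf S v = blockOf S v

lemma step (hr : 4 ≤ S.r) (h3 : 3 ≤ S.att) (har : S.att < S.r)
    (c0 : AltCycle S.Γ S.O (2 * S.r)) {g : S.Γ ≃g S.Γ} (hg : g ∈ S.G)
    {E F : Set (Sym2 V)} (hE : IsAltEdgeSet S.Γ S.O (2 * S.r) E)
    (hF : IsAltEdgeSet S.Γ S.O (2 * S.r) F) (hGood : Good S g E)
    (hshare : (suppOf E ∩ suppOf F).Nonempty) : Good S g F := by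
  by_cases hEF : E = F
  · rwa [← hEF]
  obtain ⟨v₀, hv₀E, hv₀F⟩ := hshare
  obtain ⟨X, rfl⟩ := hE
  obtain ⟨Y, rfl⟩ := hF
  obtain ⟨i₀, hi₀⟩ : v₀ ∈ cycVerts X := by rwa [← suppOf_cycEdges]
  obtain ⟨j₀, hj₀⟩ : v₀ ∈ cycVerts Y := by rwa [← suppOf_cycEdges]
  have hv : X.f i₀ = Y.f j₀ := by rw [hi₀, hj₀]
  have hfixX : Sym2.map (g : V → V) '' cycEdges X = cycEdges X := hGood.1
  have hAfixg : (g : V → V) '' blockOf S v₀ = blockOf S v₀ := hGood.2 v₀ hv₀E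
  have hblocksX : ∀ i, (g : V → V) '' blockOf S (X.f i) = blockOf S (X.f i) := fun i =>
    hGood.2 (X.f i) (by rw [suppOf_cycEdges]; exact mem_cycVerts X i)
  have hfixYg : Sym2.map (g : V → V) '' cycEdges Y = cycEdges Y :=
    neighbor_fix hEF ⟨i₀, hi₀⟩ ⟨j₀, hj₀⟩ hg hfixX hAfixg
  have hQYsub : ∀ q ∈ Q Y j₀, Y.f q ∈ blockOf S v₀ := by
    intro q hq
    rw [← hj₀]
    exact hq
  have hAsubX : blockOf S v₀ ⊆ cycVerts X := by
    intro a ha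
    rw [← suppOf_cycEdges]
    exact blockOf_subset (cyc_mem_cyclesAt X ⟨i₀, hi₀⟩) ha
  obtain ⟨k, hkrot, hkH⟩ := rot_of_fix_all hr har c0 hg X hfixX hblocksX
  by_cases hk0 : k = 0
  · -- `g` fixes `X` pointwise, hence `Y` pointwise
    have hgXid : ∀ i, (g : V → V) (X.f i) = X.f i := by
      intro i
      rw [hkrot i, hk0, add_zero]
    have hgYid : ∀ i, (g : V → V) (Y.f i) = Y.f i := by
      refine pointwise_id_of_fix_three hr hg Y hfixYg (B := Q Y j₀) ?_ ?_
      · intro q hq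
        obtain ⟨p, hp⟩ := hAsubX (hQYsub q hq)
        rw [← hp, hgXid]
      · rw [ncard_Q]
        omega
    refine ⟨hfixYg, ?_⟩
    intro w hw
    apply image_id_of_pointwise
    intro b hb
    have hbY : b ∈ cycVerts Y := by
      rw [← suppOf_cycEdges]
      exact blockOf_subset ⟨⟨Y, rfl⟩, hw⟩ hb
    obtain ⟨q, rfl⟩ := hbY
    exact hgYid q
  · -- main branch: `g` rotates `X` by `k ≠ 0`
    have htpos : 0 < (Hst X i₀).ncard := ncard_Hst_pos X i₀
    have hkH' : k ∈ Hst X i₀ := by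
      rw [Hst_uniform hr c0 X i₀ 0]
      exact hkH
    have hkK : k ∈ Kset S ((Hst X i₀).ncard) := by
      rw [← Hst_eq_Kset X i₀]
      exact hkH'
    obtain ⟨m, hm, hkrep⟩ := Kset_rep htpos hkK
    set e₀ : ZMod (2 * S.r) :=
      ((2 * (S.r / Nat.gcd ((Hst X i₀).ncard) S.r) : ℕ) : ZMod (2 * S.r)) with he₀def
    have hkme : k = m • e₀ := by
      rw [hkrep, he₀def, nsmul_eq_mul]
      push_cast
      ring
    have he₀K : e₀ ∈ Kset S ((Hst X i₀).ncard) := by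
      refine ⟨by rw [he₀def]; exact P2_even _, ?_⟩
      have hgr : Nat.gcd ((Hst X i₀).ncard) S.r ∣ S.r := Nat.gcd_dvd_right _ _
      have hc : Nat.gcd ((Hst X i₀).ncard) S.r *
          (S.r / Nat.gcd ((Hst X i₀).ncard) S.r) = S.r := Nat.mul_div_cancel' hgr
      have hdvd : 2 * S.r ∣ (Hst X i₀).ncard *
          (2 * (S.r / Nat.gcd ((Hst X i₀).ncard) S.r)) := by
        obtain ⟨u, hu⟩ := Nat.gcd_dvd_left ((Hst X i₀).ncard) S.r
        refine ⟨u, ?_⟩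
        have key : ∀ (a gd rr u q : ℕ), a = gd * u → gd * q = rr →
            a * (2 * q) = 2 * rr * u := by
          intro a gd rr u q h1 h2
          subst h1
          subst h2
          ring
        exact key _ _ _ _ _ hu hc
      have hz : (((Hst X i₀).ncard * (2 * (S.r / Nat.gcd ((Hst X i₀).ncard) S.r)) : ℕ) :
          ZMod (2 * S.r)) = 0 := by
        rw [ZMod.natCast_eq_zero_iff]
        exact hdvd
      rw [Nat.cast_mul] at hz
      rw [he₀def]
      exact hz
    have he₀ne : e₀ ≠ 0 := by
      intro h0
      apply hk0
      rw [hkme, h0, smul_zero]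
    have he₀Hi : e₀ ∈ Hst X i₀ := by
      rw [Hst_eq_Kset X i₀]
      exact he₀K
    have hgen : ∀ s ∈ Hst X i₀, ∃ n : ℕ, s = n • e₀ := by
      intro s hs
      have hsK : s ∈ Kset S ((Hst X i₀).ncard) := by
        rw [← Hst_eq_Kset X i₀]
        exact hs
      obtain ⟨n, -, hrep⟩ := Kset_rep htpos hsK
      refine ⟨n, ?_⟩
      rw [hrep, he₀def, nsmul_eq_mul]
      push_cast
      ring
    have he₀par : P2 S e₀ = 0 := he₀K.1
    obtain ⟨h, hh, hfixXh, hroth⟩ := rot_tool hr c0 X he₀par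
    have he₀H : ∀ j, e₀ ∈ Hst X j := by
      intro j
      rw [Hst_uniform hr c0 X j i₀]
      exact he₀Hi
    have hblocksh : ∀ j, (h : V → V) '' blockOf S (X.f j) = blockOf S (X.f j) := by
      intro j
      have hmem : j + e₀ ∈ Q X j := by
        have h2 := (he₀H j).2
        rw [← h2, mem_trs]
        simpa using self_mem_Q X j
      calc (h : V → V) '' blockOf S (X.f j)
          = blockOf S ((h : V → V) (X.f j)) := (blockOf_map h hh _).symm
        _ = blockOf S (X.f (j + e₀)) := by rw [hroth j]
        _ = blockOf S (X.f j) := blockOf_eq_of_mem hmem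
    have hAfixh : (h : V → V) '' blockOf S v₀ = blockOf S v₀ := by
      rw [← hi₀]
      exact hblocksh i₀
    have hfixYh : Sym2.map (h : V → V) '' cycEdges Y = cycEdges Y :=
      neighbor_fix hEF ⟨i₀, hi₀⟩ ⟨j₀, hj₀⟩ hh hfixXh hAfixh
    have hhmG : (h ^ m : S.Γ ≃g S.Γ) ∈ S.G := Subgroup.pow_mem S.G hh m
    rcases dihedral hr hh Y hfixYh with ⟨eY, hkY⟩ | ⟨cY, hkY⟩
    · -- rotation case
      have heYpar : P2 S eY = 0 := rot_even hr hh Y hkY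
      have hkYpar : P2 S (m • eY) = 0 := by
        rw [map_nsmul, heYpar, smul_zero]
      have hpowX : ∀ i, ((h ^ m : S.Γ ≃g S.Γ) : V → V) (X.f i) = X.f (i + k) := by
        intro i
        rw [hkme]
        exact pow_rot hroth m i
      have hpowY : ∀ i, ((h ^ m : S.Γ ≃g S.Γ) : V → V) (Y.f i) = Y.f (i + m • eY) :=
        pow_rot hkY m
      have hφG : g * (h ^ m)⁻¹ ∈ S.G := S.G.mul_mem hg (S.G.inv_mem hhmG)
      have hφX : ∀ i, ((g * (h ^ m)⁻¹ : S.Γ ≃g S.Γ) : V → V) (X.f i) = X.f i := by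
        intro i
        show (g : V → V) (((h ^ m)⁻¹ : S.Γ ≃g S.Γ) (X.f i)) = X.f i
        have hinv : ((h ^ m)⁻¹ : S.Γ ≃g S.Γ) (X.f i) = X.f (i - k) := by
          have h2 : ((h ^ m : S.Γ ≃g S.Γ) : V → V) (X.f (i - k)) = X.f i := by
            rw [hpowX (i - k)]
            congr 1
            ring
          calc ((h ^ m)⁻¹ : S.Γ ≃g S.Γ) (X.f i)
              = ((h ^ m)⁻¹ : S.Γ ≃g S.Γ) (((h ^ m : S.Γ ≃g S.Γ) : V → V) (X.f (i - k))) := by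
                rw [h2]
            _ = X.f (i - k) := (h ^ m).toEquiv.symm_apply_apply _
        rw [hinv, hkrot (i - k)]
        congr 1
        ring
      have hfixYφ : Sym2.map ((g * (h ^ m)⁻¹ : S.Γ ≃g S.Γ) : V → V) '' cycEdges Y =
          cycEdges Y := by
        rw [mapE_mul, fix_inv (mapE_pow_fix hfixYh m), hfixYg]
      have hφid : ∀ i, ((g * (h ^ m)⁻¹ : S.Γ ≃g S.Γ) : V → V) (Y.f i) = Y.f i := by
        refine pointwise_id_of_fix_three hr hφG Y hfixYφ (B := Q Y j₀) ?_ ?_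
        · intro q hq
          obtain ⟨p, hp⟩ := hAsubX (hQYsub q hq)
          rw [← hp, hφX]
        · rw [ncard_Q]
          omega
      have hgY : ∀ i, (g : V → V) (Y.f i) = Y.f (i + m • eY) := by
        intro i
        have hsplit : (g : V → V) (Y.f i) =
            ((g * (h ^ m)⁻¹ : S.Γ ≃g S.Γ) : V → V)
              (((h ^ m : S.Γ ≃g S.Γ) : V → V) (Y.f i)) := by
          show (g : V → V) (Y.f i) = (g : V → V) (((h ^ m)⁻¹ : S.Γ ≃g S.Γ)
            (((h ^ m : S.Γ ≃g S.Γ) : V → V) (Y.f i)))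
          congr 1
          exact ((h ^ m).toEquiv.symm_apply_apply _).symm
        rw [hsplit, hpowY i, hφid]
      refine ⟨hfixYg, ?_⟩
      have hstab : trs (Q Y j₀) (m • eY) = Q Y j₀ := by
        have h1 : Y.f '' trs (Q Y j₀) (m • eY) = Y.f '' Q Y j₀ := by
          have h2 : Y.f '' trs (Q Y j₀) (m • eY) = (g : V → V) '' (Y.f '' Q Y j₀) := by
            unfold trs
            have hfun : (Y.f ∘ (· + m • eY)) = ((g : V → V) ∘ Y.f) := by
              funext q
              simp only [Function.comp_apply]
              rw [hgY q]
            rw [← Set.image_comp, ← Set.image_comp, hfun]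
          rw [h2, f_image_Q, hj₀]
          exact hAfixg
        exact Set.image_injective.mpr Y.inj h1
      exact blocks_of_rot hr c0 hg Y hkYpar hgY hstab
    · -- reflection case is impossible
      exfalso
      have hAfixh' : (h : V → V) '' blockOf S (Y.f j₀) = blockOf S (Y.f j₀) := by
        rw [hj₀]
        exact hAfixh
      exact corner_kill hr h3 c0 hEF hv hh he₀ne hroth hAfixh' he₀Hi hgen hkY

end Step

section Final

lemma walk_good (hr : 4 ≤ S.r) (h3 : 3 ≤ S.att) (har : S.att < S.r)
    (c0 : AltCycle S.Γ S.O (2 * S.r)) {g : S.Γ ≃g S.Γ} (hg : g ∈ S.G)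
    {u w : V} (p : S.Γ.Walk u w) :
    (∀ E ∈ cyclesAt S u, Good S g E) → ∀ E ∈ cyclesAt S w, Good S g E := by
  induction p with
  | nil => exact id
  | @cons a b w' hadj q ih =>
    intro hbase
    apply ih
    intro E hE
    obtain ⟨E', hE', hmemE'⟩ := edge_in_alt c0 hadj
    have hE'at : E' ∈ cyclesAt S a := ⟨hE', ⟨s(a, b), hmemE', Sym2.mem_mk_left _ _⟩⟩
    have hGoodE' : Good S g E' := hbase E' hE'at
    exact step hr h3 har c0 hg hE' hE.1 hGoodE'
      ⟨b, ⟨s(a, b), hmemE', Sym2.mem_mk_right _ _⟩, hE.2⟩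

end Final

end Lem51
end HalfArc


open HalfArc

/-- Lemma 5.1 of the paper: if `3 ≤ a < r` and `γ ∈ G` fixes some
`G`-alternating cycle `C` setwise as well as every `G`-attachment set meeting `C`,
then `γ` fixes every `G`-alternating cycle setwise. -/
theorem statement_6 {V : Type*} (S : Setup V) (h3 : 3 ≤ S.att) (har : S.att < S.r)
    (g : S.Γ ≃g S.Γ) (hg : g ∈ S.G) (c : AltCycle S.Γ S.O (2 * S.r))
    (hfix : Sym2.map (g : V → V) '' cycEdges c = cycEdges c)
    (hatt : ∀ A : Set V, IsAttSet S.Γ S.O (2 * S.r) A → (A ∩ cycVerts c).Nonempty →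
      (g : V → V) '' A = A) :
    g ∈ S.altKernel := by
  classical
  have hr : 4 ≤ S.r := by omega
  refine ⟨hg, ?_⟩
  intro E hE
  have hGoodc : Lem51.Good S g (cycEdges c) := by
    refine ⟨hfix, ?_⟩
    intro v hv
    apply hatt
    · exact Lem51.blockOf_isAtt v
    · exact ⟨v, Lem51.mem_blockOf_self v, by rwa [← Lem51.suppOf_cycEdges]⟩
  have hbase : ∀ E' ∈ Lem51.cyclesAt S (c.f 0), Lem51.Good S g E' := by
    intro E' hE'
    refine Lem51.step hr h3 har c hg ⟨c, rfl⟩ hE'.1 hGoodc ⟨c.f 0, ?_, hE'.2⟩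
    rw [Lem51.suppOf_cycEdges]
    exact Lem51.mem_cycVerts c 0
  obtain ⟨x, hx⟩ := hE
  have hw : x.f 0 ∈ suppOf E := by
    rw [← hx, Lem51.suppOf_cycEdges]
    exact Lem51.mem_cycVerts x 0
  obtain ⟨p⟩ : S.Γ.Reachable (c.f 0) (x.f 0) := S.conn.preconnected (c.f 0) (x.f 0)
  exact (Lem51.walk_good hr h3 har c hg p hbase E ⟨⟨x, hx⟩, hw⟩).1
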